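/- arXiv:1803.01905 — 6 statements merged into one kernel-verified Lean document; each statement's English description precedes it below -/
import Mathlib

section
/- For gradient descent on the exponential loss over linearly separable data with fixed step size 0 < η < 1/L(w(0)), the normalized margin converges to the maximum margin at rate 1/log t: there exist a constant C > 0 and a time t₀ such that for all t > t₀, min_n ⟨w(t), x_n⟩ / ‖w(t)‖ ≥ γ − C / log t. -/
open scoped RealInnerProductSpace BigOperators
open Filter

/-- The exponential loss `L(w) = ∑ₙ exp(-⟨w, xₙ⟩)`. -/
noncomputable def expLoss {d N : ℕ} (x : Fin N → EuclideanSpace ℝ (Fin d))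
    (w : EuclideanSpace ℝ (Fin d)) : ℝ :=
  ∑ n, Real.exp (-⟪w, x n⟫)

/-- The gradient of the exponential loss, `∇L(w) = -∑ₙ exp(-⟨w, xₙ⟩) xₙ`. -/
noncomputable def expLossGrad {d N : ℕ} (x : Fin N → EuclideanSpace ℝ (Fin d))
    (w : EuclideanSpace ℝ (Fin d)) : EuclideanSpace ℝ (Fin d) :=
  -∑ n, Real.exp (-⟪w, x n⟫) • x n

lemma expQuad {z : ℝ} (hz : |z| ≤ 1) : Real.exp z ≤ 1 + z + z ^ 2 := by
  have h := Real.exp_bound hz (n := 2) (by norm_num)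
  have h2 : (∑ m ∈ Finset.range 2, z ^ m / m.factorial) = 1 + z := by
    simp [Finset.sum_range_succ]
  rw [h2] at h
  norm_num [Nat.factorial] at h
  have := (abs_sub_le_iff.1 h).1
  nlinarith [sq_abs z, sq_nonneg z]

lemma sumInvSq (t : ℕ) : ∑ s ∈ Finset.range t, (1:ℝ)/((s:ℝ)+1)^2 ≤ 2 := by
  have key : ∀ t : ℕ, ∑ s ∈ Finset.range t, (1:ℝ)/((s:ℝ)+1)^2 ≤ 2 - 2/((t:ℝ)+1) := by
    intro t
    induction t with
    | zero => norm_num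
    | succ n ih =>
      rw [Finset.sum_range_succ]
      have h1 : (0:ℝ) < (n:ℝ) + 1 := by positivity
      have h2 : (0:ℝ) < (n:ℝ) + 2 := by positivity
      have h3 : (1:ℝ)/((n:ℝ)+1)^2 ≤ 2/((n:ℝ)+1) - 2/((n:ℝ)+2) := by
        rw [div_sub_div _ _ (ne_of_gt h1) (ne_of_gt h2),
          div_le_div_iff₀ (by positivity) (by positivity)]
        nlinarith
      push_cast
      have he : ((n:ℝ)+1+1) = (n:ℝ)+2 := by ring
      rw [he]
      linarith
  have h4 : (0:ℝ) < 2/((t:ℝ)+1) := by positivity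
  linarith [key t]

section Aux

variable {d N : ℕ} (x : Fin N → EuclideanSpace ℝ (Fin d))

/-- The negative gradient direction. -/
noncomputable def gVec (w : EuclideanSpace ℝ (Fin d)) : EuclideanSpace ℝ (Fin d) :=
  ∑ n, Real.exp (-⟪w, x n⟫) • x n

lemma expLoss_pos (hNe : (Finset.univ : Finset (Fin N)).Nonempty)
    (w : EuclideanSpace ℝ (Fin d)) : 0 < expLoss x w :=
  Finset.sum_pos (fun n _ => Real.exp_pos _) hNe

lemma norm_gVec_le (hx : ∀ n, ‖x n‖ ≤ 1) (w : EuclideanSpace ℝ (Fin d)) :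
    ‖gVec x w‖ ≤ expLoss x w := by
  refine (norm_sum_le _ _).trans ?_
  refine Finset.sum_le_sum fun n _ => ?_
  rw [norm_smul, Real.norm_eq_abs, abs_of_pos (Real.exp_pos _)]
  calc Real.exp (-⟪w, x n⟫) * ‖x n‖ ≤ Real.exp (-⟪w, x n⟫) * 1 :=
        mul_le_mul_of_nonneg_left (hx n) (Real.exp_pos _).le
    _ = Real.exp (-⟪w, x n⟫) := mul_one _

lemma inner_gVec (w u : EuclideanSpace ℝ (Fin d)) :
    ⟪u, gVec x w⟫ = ∑ n, Real.exp (-⟪w, x n⟫) * ⟪u, x n⟫ := by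
  rw [gVec, inner_sum]
  simp_rw [real_inner_smul_right]

lemma gVec_lb {γ : ℝ} (u : EuclideanSpace ℝ (Fin d)) (hu : ‖u‖ = 1)
    (hγn : ∀ n, γ ≤ ⟪u, x n⟫) (w : EuclideanSpace ℝ (Fin d)) :
    γ * expLoss x w ≤ ‖gVec x w‖ := by
  have h1 : γ * expLoss x w ≤ ⟪u, gVec x w⟫ := by
    rw [inner_gVec, expLoss, Finset.mul_sum]
    refine Finset.sum_le_sum fun n _ => ?_
    rw [mul_comm]
    exact mul_le_mul_of_nonneg_left (hγn n) (Real.exp_pos _).le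
  calc γ * expLoss x w ≤ ⟪u, gVec x w⟫ := h1
    _ ≤ ‖u‖ * ‖gVec x w‖ := real_inner_le_norm _ _
    _ = ‖gVec x w‖ := by rw [hu, one_mul]

lemma step_bound (hx : ∀ n, ‖x n‖ ≤ 1) (w : EuclideanSpace ℝ (Fin d)) {η : ℝ}
    (hη : 0 ≤ η) (hηL : η * expLoss x w ≤ 1) :
    expLoss x (w + η • gVec x w) ≤
      expLoss x w - η * ‖gVec x w‖ ^ 2 + η ^ 2 * expLoss x w * ‖gVec x w‖ ^ 2 := by
  set g := gVec x w with hg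
  set L := expLoss x w with hL
  have hgle : ‖g‖ ≤ L := norm_gVec_le x hx w
  have hgnn : (0:ℝ) ≤ ‖g‖ := norm_nonneg _
  have hb : ∀ n, |⟪g, x n⟫| ≤ ‖g‖ := fun n => by
    calc |⟪g, x n⟫| ≤ ‖g‖ * ‖x n‖ := abs_real_inner_le_norm _ _
      _ ≤ ‖g‖ * 1 := mul_le_mul_of_nonneg_left (hx n) hgnn
      _ = ‖g‖ := mul_one _
  have hz : ∀ n, |(-(η * ⟪g, x n⟫))| ≤ 1 := fun n => by
    rw [abs_neg, abs_mul, abs_of_nonneg hη]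
    calc η * |⟪g, x n⟫| ≤ η * ‖g‖ := mul_le_mul_of_nonneg_left (hb n) hη
      _ ≤ η * L := mul_le_mul_of_nonneg_left hgle hη
      _ ≤ 1 := hηL
  have hrw : expLoss x (w + η • g) =
      ∑ n, Real.exp (-⟪w, x n⟫) * Real.exp (-(η * ⟪g, x n⟫)) := by
    unfold expLoss
    refine Finset.sum_congr rfl fun n _ => ?_
    rw [inner_add_left, real_inner_smul_left, neg_add, Real.exp_add]
  have hterm : ∀ n, Real.exp (-⟪w, x n⟫) * Real.exp (-(η * ⟪g, x n⟫)) ≤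
      Real.exp (-⟪w, x n⟫) * (1 - η * ⟪g, x n⟫ + (η * ⟪g, x n⟫) ^ 2) := fun n => by
    have h := expQuad (hz n)
    have h' : Real.exp (-(η * ⟪g, x n⟫)) ≤ 1 - η * ⟪g, x n⟫ + (η * ⟪g, x n⟫) ^ 2 := by
      calc Real.exp (-(η * ⟪g, x n⟫)) ≤ 1 + (-(η * ⟪g, x n⟫)) + (-(η * ⟪g, x n⟫)) ^ 2 := h
        _ = 1 - η * ⟪g, x n⟫ + (η * ⟪g, x n⟫) ^ 2 := by ring
    exact mul_le_mul_of_nonneg_left h' (Real.exp_pos _).le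
  have hS1 : ∑ n, Real.exp (-⟪w, x n⟫) * ⟪g, x n⟫ = ‖g‖ ^ 2 := by
    rw [← real_inner_self_eq_norm_sq]
    rw [inner_gVec x w g]
  have hS2 : ∑ n, Real.exp (-⟪w, x n⟫) * ⟪g, x n⟫ ^ 2 ≤ L * ‖g‖ ^ 2 := by
    have : ∀ n : Fin N, Real.exp (-⟪w, x n⟫) * ⟪g, x n⟫ ^ 2 ≤
        Real.exp (-⟪w, x n⟫) * ‖g‖ ^ 2 := fun n => by
      refine mul_le_mul_of_nonneg_left ?_ (Real.exp_pos _).le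
      rw [← sq_abs]
      exact pow_le_pow_left₀ (abs_nonneg _) (hb n) 2
    calc ∑ n, Real.exp (-⟪w, x n⟫) * ⟪g, x n⟫ ^ 2 ≤
        ∑ n, Real.exp (-⟪w, x n⟫) * ‖g‖ ^ 2 := Finset.sum_le_sum fun n _ => this n
      _ = L * ‖g‖ ^ 2 := by rw [hL, expLoss, ← Finset.sum_mul]
  calc expLoss x (w + η • g) = ∑ n, Real.exp (-⟪w, x n⟫) * Real.exp (-(η * ⟪g, x n⟫)) := hrw
    _ ≤ ∑ n, Real.exp (-⟪w, x n⟫) * (1 - η * ⟪g, x n⟫ + (η * ⟪g, x n⟫) ^ 2) :=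
        Finset.sum_le_sum fun n _ => hterm n
    _ = ∑ n, (Real.exp (-⟪w, x n⟫) - η * (Real.exp (-⟪w, x n⟫) * ⟪g, x n⟫)
          + η ^ 2 * (Real.exp (-⟪w, x n⟫) * ⟪g, x n⟫ ^ 2)) := by
        refine Finset.sum_congr rfl fun n _ => ?_; ring
    _ = L - η * ‖g‖ ^ 2 + η ^ 2 * ∑ n, Real.exp (-⟪w, x n⟫) * ⟪g, x n⟫ ^ 2 := by
        rw [Finset.sum_add_distrib, Finset.sum_sub_distrib, ← Finset.mul_sum, ← Finset.mul_sum,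
          hS1, hL, expLoss]
    _ ≤ L - η * ‖g‖ ^ 2 + η ^ 2 * (L * ‖g‖ ^ 2) := by
        have h2 : (0:ℝ) ≤ η ^ 2 := sq_nonneg _
        nlinarith [hS2]
    _ = L - η * ‖g‖ ^ 2 + η ^ 2 * L * ‖g‖ ^ 2 := by ring

end Aux

set_option maxHeartbeats 1000000 in
/-- Gradient descent on the exponential loss over separable data with fixed step size
`0 < η < 1/L(w(0))` drives the normalized margin to the max margin `γ` at rate `1/log t`. -/
theorem gd_expLoss_margin_rate_log
    {d N : ℕ} (x : Fin N → EuclideanSpace ℝ (Fin d))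
    (hx : ∀ n, ‖x n‖ ≤ 1)
    (hsep : ∃ wstar : EuclideanSpace ℝ (Fin d), ∀ n, 0 < ⟪wstar, x n⟫)
    (hNe : (Finset.univ : Finset (Fin N)).Nonempty)
    (γ : ℝ)
    (hγ : IsGreatest {m : ℝ | ∃ u : EuclideanSpace ℝ (Fin d), ‖u‖ = 1 ∧
        m = Finset.univ.inf' hNe (fun n => ⟪u, x n⟫)} γ)
    (η : ℝ) (w : ℕ → EuclideanSpace ℝ (Fin d))
    (hη : 0 < η) (hη' : η < 1 / expLoss x (w 0))
    (hGD : ∀ t : ℕ, w (t + 1) = w t - η • expLossGrad x (w t)) :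
    ∃ C > 0, ∃ t₀ : ℕ, ∀ t : ℕ, t > t₀ →
      γ - C / Real.log t ≤
        Finset.univ.inf' hNe (fun n => ⟪w t, x n⟫ / ‖w t‖) := by
  classical
  obtain ⟨u, hu1, huγ⟩ := hγ.1
  have hγn : ∀ n, γ ≤ ⟪u, x n⟫ := fun n =>
    huγ ▸ Finset.inf'_le _ (Finset.mem_univ n)
  obtain ⟨n₀, -⟩ := id hNe
  obtain ⟨ws, hws⟩ := hsep
  have hws0 : ws ≠ 0 := by
    intro h
    have h2 := hws n₀
    rw [h, inner_zero_left] at h2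
    exact lt_irrefl 0 h2
  have hγpos : 0 < γ := by
    have hu0 : ‖((‖ws‖⁻¹ : ℝ) • ws : EuclideanSpace ℝ (Fin d))‖ = 1 :=
      norm_smul_inv_norm hws0
    have hmem : (Finset.univ.inf' hNe fun n =>
        ⟪((‖ws‖⁻¹ : ℝ) • ws : EuclideanSpace ℝ (Fin d)), x n⟫) ≤ γ :=
      hγ.2 ⟨_, hu0, rfl⟩
    have hpos : 0 < Finset.univ.inf' hNe fun n =>
        ⟪((‖ws‖⁻¹ : ℝ) • ws : EuclideanSpace ℝ (Fin d)), x n⟫ := by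
      rw [Finset.lt_inf'_iff]
      intro n _
      rw [real_inner_smul_left]
      exact mul_pos (inv_pos.2 (norm_pos_iff.2 hws0)) (hws n)
    linarith
  have hγ1 : γ ≤ 1 := by
    have h1 := hγn n₀
    have h2 := real_inner_le_norm u (x n₀)
    have h3 := hx n₀
    rw [hu1, one_mul] at h2
    linarith
  set L0 := expLoss x (w 0) with hL0def
  have hL0pos : 0 < L0 := expLoss_pos x hNe _
  have hηL0 : η * L0 < 1 := (lt_div_iff₀ hL0pos).1 hη'
  set δ := 1 - η * L0 with hδdef
  have hδpos : 0 < δ := by rw [hδdef]; linarith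
  set c := δ * η * γ ^ 2 with hcdef
  have hcpos : 0 < c := mul_pos (mul_pos hδpos hη) (pow_pos hγpos 2)
  have hrec : ∀ t, w (t + 1) = w t + η • gVec x (w t) := by
    intro t
    rw [hGD t]
    show w t - η • expLossGrad x (w t) = w t + η • gVec x (w t)
    rw [expLossGrad, smul_neg, sub_neg_eq_add]
    rfl
  have hLpos : ∀ t, 0 < expLoss x (w t) := fun t => expLoss_pos x hNe _
  have hstep : ∀ t, expLoss x (w t) ≤ L0 →
      expLoss x (w (t + 1)) ≤ expLoss x (w t) - δ * η * ‖gVec x (w t)‖ ^ 2 := by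
    intro t hle
    have hηL : η * expLoss x (w t) ≤ 1 := by nlinarith
    have h := step_bound x hx (w t) hη.le hηL
    rw [← hrec t] at h
    have hg2 : (0 : ℝ) ≤ ‖gVec x (w t)‖ ^ 2 := sq_nonneg _
    rw [hδdef]
    nlinarith [mul_le_mul_of_nonneg_left hle (mul_nonneg (sq_nonneg η) hg2)]
  have hLle : ∀ t, expLoss x (w t) ≤ L0 := by
    intro t
    induction t with
    | zero => exact le_refl _
    | succ n ih =>
      have h := hstep n ih
      have hg2 : (0 : ℝ) ≤ ‖gVec x (w n)‖ ^ 2 := sq_nonneg _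
      nlinarith [mul_nonneg (mul_nonneg hδpos.le hη.le) hg2]
  have hstep' : ∀ t, expLoss x (w (t + 1)) ≤
      expLoss x (w t) - δ * η * ‖gVec x (w t)‖ ^ 2 := fun t => hstep t (hLle t)
  have hglb : ∀ t, γ * expLoss x (w t) ≤ ‖gVec x (w t)‖ := fun t =>
    gVec_lb x u hu1 hγn (w t)
  have hgub : ∀ t, ‖gVec x (w t)‖ ≤ expLoss x (w t) := fun t => norm_gVec_le x hx (w t)
  have hstep2 : ∀ t, expLoss x (w (t + 1)) ≤
      expLoss x (w t) - c * expLoss x (w t) ^ 2 := by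
    intro t
    have h := hstep' t
    have h2 := hglb t
    have h3 : γ ^ 2 * expLoss x (w t) ^ 2 ≤ ‖gVec x (w t)‖ ^ 2 := by
      nlinarith [mul_self_le_mul_self (mul_nonneg hγpos.le (hLpos t).le) h2]
    rw [hcdef]
    nlinarith [mul_le_mul_of_nonneg_left h3 (mul_pos hδpos hη).le]
  have hinv : ∀ t : ℕ, 1 / L0 + c * (t : ℝ) ≤ 1 / expLoss x (w t) := by
    intro t
    induction t with
    | zero =>
      rw [hL0def]
      norm_num
    | succ n ih =>
      have h := hstep2 n
      have h1 := hLpos n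
      have h2 := hLpos (n + 1)
      have hd : 1 / expLoss x (w n) + c ≤ 1 / expLoss x (w (n + 1)) := by
        rw [le_div_iff₀ h2]
        have hpos : (0 : ℝ) ≤ 1 / expLoss x (w n) + c := by
          have := one_div_pos.2 h1
          linarith
        have hexp : (1 / expLoss x (w n) + c) *
            (expLoss x (w n) - c * expLoss x (w n) ^ 2) =
            1 - c ^ 2 * expLoss x (w n) ^ 2 := by
          field_simp
          ring
        nlinarith [mul_le_mul_of_nonneg_left h hpos, sq_nonneg (c * expLoss x (w n))]
      push_cast
      linarith
  have hLub : ∀ t : ℕ, 1 ≤ t → expLoss x (w t) ≤ 1 / (c * (t : ℝ)) := by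
    intro t ht
    have h1 := hLpos t
    have htpos : (0 : ℝ) < (t : ℝ) := by exact_mod_cast ht
    have h2 : (0 : ℝ) < c * (t : ℝ) := mul_pos hcpos htpos
    have h3 : c * (t : ℝ) ≤ 1 / expLoss x (w t) := by
      have h4 : (0 : ℝ) < 1 / L0 := one_div_pos.2 hL0pos
      linarith [hinv t]
    rw [le_div_iff₀ h2]
    have h5 := mul_le_mul_of_nonneg_left h3 h1.le
    rw [mul_one_div, div_self (ne_of_gt h1)] at h5
    linarith
  have hsumsq : ∀ t, ∑ s ∈ Finset.range t, expLoss x (w s) ^ 2 ≤ L0 ^ 2 + 2 / c ^ 2 := by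
    intro t
    cases t with
    | zero =>
      simp only [Finset.range_zero, Finset.sum_empty]
      have h1 : (0:ℝ) < 2 / c ^ 2 := div_pos two_pos (pow_pos hcpos 2)
      nlinarith [sq_nonneg L0]
    | succ m =>
      rw [Finset.sum_range_succ']
      have hbd : ∀ i ∈ Finset.range m, expLoss x (w (i + 1)) ^ 2 ≤
          1 / c ^ 2 * (1 / ((i : ℝ) + 1) ^ 2) := by
        intro i _
        have h1 : expLoss x (w (i + 1)) ≤ 1 / (c * ((i : ℝ) + 1)) := by
          have := hLub (i + 1) (Nat.le_add_left 1 i)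
          push_cast at this
          exact this
        have h2 : expLoss x (w (i + 1)) ^ 2 ≤ (1 / (c * ((i : ℝ) + 1))) ^ 2 :=
          pow_le_pow_left₀ (hLpos _).le h1 2
        have h3 : (1 / (c * ((i : ℝ) + 1))) ^ 2 = 1 / c ^ 2 * (1 / ((i : ℝ) + 1) ^ 2) := by
          rw [div_pow, one_pow, mul_pow, div_mul_div_comm, one_mul]
        linarith [h3 ▸ h2]
      have h4 : ∑ i ∈ Finset.range m, expLoss x (w (i + 1)) ^ 2 ≤
          1 / c ^ 2 * ∑ i ∈ Finset.range m, (1 : ℝ) / ((i : ℝ) + 1) ^ 2 := by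
        rw [Finset.mul_sum]
        exact Finset.sum_le_sum hbd
      have h5 : (1 : ℝ) / c ^ 2 * ∑ i ∈ Finset.range m, (1 : ℝ) / ((i : ℝ) + 1) ^ 2 ≤
          1 / c ^ 2 * 2 := by
        refine mul_le_mul_of_nonneg_left (sumInvSq m)
          (div_nonneg zero_le_one (pow_pos hcpos 2).le)
      have h6 : (1 : ℝ) / c ^ 2 * 2 = 2 / c ^ 2 := by ring
      linarith
  have hmargstep : ∀ s, γ * ‖w (s + 1) - w s‖ ≤
      (Real.log (expLoss x (w s)) - Real.log (expLoss x (w (s + 1)))) +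
        η ^ 2 * expLoss x (w s) ^ 2 := by
    intro s
    have hLs := hLpos s
    have hLs1 := hLpos (s + 1)
    have hΔ : ‖w (s + 1) - w s‖ = η * ‖gVec x (w s)‖ := by
      rw [hrec s, add_sub_cancel_left, norm_smul, Real.norm_eq_abs, abs_of_pos hη]
    have hlog : (expLoss x (w s) - expLoss x (w (s + 1))) / expLoss x (w s) ≤
        Real.log (expLoss x (w s)) - Real.log (expLoss x (w (s + 1))) := by
      have h := Real.log_le_sub_one_of_pos (div_pos hLs1 hLs)
      rw [Real.log_div (ne_of_gt hLs1) (ne_of_gt hLs)] at h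
      have hd : (expLoss x (w s) - expLoss x (w (s + 1))) / expLoss x (w s) =
          1 - expLoss x (w (s + 1)) / expLoss x (w s) := by
        field_simp
      rw [hd]
      linarith
    have hηL : η * expLoss x (w s) ≤ 1 := by
      have := hLle s
      nlinarith
    have h := step_bound x hx (w s) hη.le hηL
    rw [← hrec s] at h
    have hA2 : γ * expLoss x (w s) ≤ ‖gVec x (w s)‖ := hglb s
    have hAub : ‖gVec x (w s)‖ ≤ expLoss x (w s) := hgub s
    have hAnn : (0 : ℝ) ≤ ‖gVec x (w s)‖ := norm_nonneg _
    have h1 : γ * (η * ‖gVec x (w s)‖) - η ^ 2 * expLoss x (w s) ^ 2 ≤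
        (expLoss x (w s) - expLoss x (w (s + 1))) / expLoss x (w s) := by
      rw [le_div_iff₀ hLs]
      nlinarith [mul_le_mul_of_nonneg_left hA2 (mul_nonneg hη.le hAnn),
        mul_nonneg (mul_nonneg (sq_nonneg η) hLs.le)
          (mul_nonneg (sub_nonneg.2 hAub) (add_nonneg hAnn hLs.le))]
    rw [hΔ]
    linarith
  have htel : ∀ t, γ * ∑ s ∈ Finset.range t, ‖w (s + 1) - w s‖ ≤
      (Real.log L0 - Real.log (expLoss x (w t))) + η ^ 2 * (L0 ^ 2 + 2 / c ^ 2) := by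
    intro t
    have h1 : ∑ s ∈ Finset.range t, γ * ‖w (s + 1) - w s‖ ≤
        ∑ s ∈ Finset.range t, ((Real.log (expLoss x (w s)) -
          Real.log (expLoss x (w (s + 1)))) + η ^ 2 * expLoss x (w s) ^ 2) :=
      Finset.sum_le_sum fun s _ => hmargstep s
    rw [Finset.sum_add_distrib, Finset.sum_range_sub' (fun s => Real.log (expLoss x (w s))),
      ← Finset.mul_sum, ← hL0def] at h1
    have h4 : ∑ s ∈ Finset.range t, η ^ 2 * expLoss x (w s) ^ 2 =
        η ^ 2 * ∑ s ∈ Finset.range t, expLoss x (w s) ^ 2 :=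
      (Finset.mul_sum _ _ _).symm
    have h2 := hsumsq t
    have h3 := mul_le_mul_of_nonneg_left h2 (sq_nonneg η)
    linarith
  have hnormsum : ∀ t, ‖w t‖ ≤ ‖w 0‖ + ∑ s ∈ Finset.range t, ‖w (s + 1) - w s‖ := by
    intro t
    induction t with
    | zero => simp
    | succ n ih =>
      rw [Finset.sum_range_succ]
      have h2 : w n + (w (n + 1) - w n) = w (n + 1) := by abel
      have h3 : ‖w (n + 1)‖ ≤ ‖w n‖ + ‖w (n + 1) - w n‖ := by
        calc ‖w (n + 1)‖ = ‖w n + (w (n + 1) - w n)‖ := by rw [h2]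
          _ ≤ ‖w n‖ + ‖w (n + 1) - w n‖ := norm_add_le _ _
      linarith
  set S := L0 ^ 2 + 2 / c ^ 2 with hSdef
  set K := ‖w 0‖ + (|Real.log L0| + η ^ 2 * S) / γ + 1 with hKdef
  have hK1 : 1 ≤ K := by
    have h1 : (0 : ℝ) ≤ ‖w 0‖ := norm_nonneg _
    have hSnn : (0 : ℝ) ≤ S := by
      rw [hSdef]
      have h1 : (0:ℝ) < 2 / c ^ 2 := div_pos two_pos (pow_pos hcpos 2)
      nlinarith [sq_nonneg L0]
    have h2 : (0 : ℝ) ≤ (|Real.log L0| + η ^ 2 * S) / γ := by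
      apply div_nonneg _ hγpos.le
      have : (0 : ℝ) ≤ η ^ 2 * S := mul_nonneg (sq_nonneg η) hSnn
      linarith [abs_nonneg (Real.log L0)]
    rw [hKdef]; linarith
  have hwub : ∀ t, ‖w t‖ ≤ (-Real.log (expLoss x (w t))) / γ + K := by
    intro t
    have h1 := hnormsum t
    have h2 := htel t
    have h3 : ∑ s ∈ Finset.range t, ‖w (s + 1) - w s‖ ≤
        (Real.log L0 - Real.log (expLoss x (w t)) + η ^ 2 * S) / γ := by
      rw [le_div_iff₀ hγpos]
      nlinarith
    have h4 : (Real.log L0 - Real.log (expLoss x (w t)) + η ^ 2 * S) / γ ≤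
        (-Real.log (expLoss x (w t))) / γ + (|Real.log L0| + η ^ 2 * S) / γ := by
      rw [← add_div]
      rw [div_le_div_iff₀ hγpos hγpos]
      nlinarith [le_abs_self (Real.log L0)]
    rw [hKdef]
    linarith
  have hmarg : ∀ t n, -Real.log (expLoss x (w t)) ≤ ⟪w t, x n⟫ := by
    intro t n
    have h1 : Real.exp (-⟪w t, x n⟫) ≤ expLoss x (w t) :=
      Finset.single_le_sum (f := fun m => Real.exp (-⟪w t, x m⟫))
        (fun i _ => (Real.exp_pos _).le) (Finset.mem_univ n)
    have h2 := Real.log_le_log (Real.exp_pos _) h1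
    rw [Real.log_exp] at h2
    linarith
  have hlb : ∀ t : ℕ, 1 ≤ t →
      Real.log c + Real.log (t : ℝ) ≤ -Real.log (expLoss x (w t)) := by
    intro t ht
    have htpos : (0 : ℝ) < (t : ℝ) := by exact_mod_cast ht
    have h1 := hLub t ht
    have h2 : Real.log (expLoss x (w t)) ≤ Real.log (1 / (c * (t : ℝ))) :=
      Real.log_le_log (hLpos t) h1
    rw [one_div, Real.log_inv, Real.log_mul (ne_of_gt hcpos) (ne_of_gt htpos)] at h2
    linarith
  have hCpos : (0 : ℝ) < 2 * γ ^ 2 * K := by nlinarith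
  refine ⟨2 * γ ^ 2 * K, hCpos, ⌈Real.exp (2 + 2 * |Real.log c|)⌉₊, ?_⟩
  intro t ht
  have ht1 : 1 ≤ t := by omega
  have htposN : 0 < t := ht1
  have htpos : (0 : ℝ) < (t : ℝ) := by exact_mod_cast htposN
  have htR : Real.exp (2 + 2 * |Real.log c|) ≤ (t : ℝ) := by
    have ha := Nat.le_ceil (Real.exp (2 + 2 * |Real.log c|))
    have hb : ((⌈Real.exp (2 + 2 * |Real.log c|)⌉₊ : ℕ) : ℝ) ≤ (t : ℝ) := by
      exact_mod_cast le_of_lt ht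
    linarith
  have hlogt : 2 + 2 * |Real.log c| ≤ Real.log (t : ℝ) :=
    (Real.le_log_iff_exp_le htpos).2 htR
  have hlogt2 : (2 : ℝ) ≤ Real.log (t : ℝ) := by linarith [abs_nonneg (Real.log c)]
  have hℓ : Real.log (t : ℝ) / 2 + 1 ≤ -Real.log (expLoss x (w t)) := by
    have h1 := hlb t ht1
    have h2 : -|Real.log c| ≤ Real.log c := neg_abs_le _
    linarith
  have hℓ2 : (2 : ℝ) ≤ -Real.log (expLoss x (w t)) := by linarith
  have hwpos : 0 < ‖w t‖ := by
    have h1 := hmarg t n₀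
    have h2 : 0 < ⟪w t, x n₀⟫ := by linarith
    have hwt : w t ≠ 0 := by
      intro h0
      rw [h0, inner_zero_left] at h2
      exact lt_irrefl 0 h2
    exact norm_pos_iff.2 hwt
  apply Finset.le_inf'
  intro n _
  have hb1 : -Real.log (expLoss x (w t)) ≤ ⟪w t, x n⟫ := hmarg t n
  have hwub' := hwub t
  set lt := Real.log (t : ℝ) with hltdef
  set ℓ := -Real.log (expLoss x (w t)) with hℓdef
  have hltpos : (0 : ℝ) < lt := by linarith
  have hℓnn : (0 : ℝ) ≤ ℓ := by linarith
  have hd1 : (0 : ℝ) < ℓ / γ + K := by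
    have : (0 : ℝ) ≤ ℓ / γ := div_nonneg hℓnn hγpos.le
    linarith
  have step1 : γ - 2 * γ ^ 2 * K / lt ≤ ℓ / (ℓ / γ + K) := by
    rw [le_div_iff₀ hd1]
    have e1 : γ * (ℓ / γ + K) = ℓ + γ * K := by field_simp
    have hCd : γ * K ≤ 2 * γ ^ 2 * K / lt * (ℓ / γ) := by
      have e2 : 2 * γ ^ 2 * K / lt * (ℓ / γ) = 2 * γ * K * ℓ / lt := by
        field_simp
      rw [e2, le_div_iff₀ hltpos]
      nlinarith [mul_nonneg (mul_nonneg hγpos.le (by linarith : (0 : ℝ) ≤ K))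
        (by linarith : (0 : ℝ) ≤ 2 * ℓ - lt)]
    have hCd2 : (0 : ℝ) ≤ 2 * γ ^ 2 * K / lt * K := by
      apply mul_nonneg _ (by linarith : (0 : ℝ) ≤ K)
      exact div_nonneg hCpos.le hltpos.le
    nlinarith [e1, hCd, hCd2]
  have step2 : ℓ / (ℓ / γ + K) ≤ ℓ / ‖w t‖ := by
    apply div_le_div_of_nonneg_left hℓnn hwpos
    linarith
  have step3 : ℓ / ‖w t‖ ≤ ⟪w t, x n⟫ / ‖w t‖ := (div_le_div_iff_of_pos_right hwpos).2 hb1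
  linarith
end

section
/- One-step loss decrease for gradient descent on the exponential loss: if the fixed step size satisfies 0 < η < 1/L(w(0)), then for every t, L(w(t+1)) ≤ L(w(t)) − η‖∇L(w(t))‖² + (η²/2)‖∇L(w(t))‖² L(w(t)). -/
open scoped RealInnerProductSpace BigOperators
open Filter

/-! ### Auxiliary scalar inequality: `exp s ≤ 1 + s + s²/3 + (s²/6) exp s` -/

lemma GD.one_sub_mul_exp_le (s : ℝ) : (1 - s) * Real.exp s ≤ 1 := by
  have h := Real.add_one_le_exp (-s)
  calc (1 - s) * Real.exp s ≤ Real.exp (-s) * Real.exp s := by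
        apply mul_le_mul_of_nonneg_right _ (Real.exp_pos s).le
        linarith
    _ = 1 := by rw [← Real.exp_add]; simp

noncomputable def GD.Hfun : ℝ → ℝ := fun s => 6 + 6*s + 2*s^2 - (6 - s^2) * Real.exp s
noncomputable def GD.Kfun : ℝ → ℝ := fun s => 6 + 4*s + (s^2 + 2*s - 6) * Real.exp s
noncomputable def GD.Mfun : ℝ → ℝ := fun s => 4 + (s^2 + 4*s - 4) * Real.exp s

lemma GD.hasDerivAt_H (s : ℝ) : HasDerivAt GD.Hfun (GD.Kfun s) s := by
  have he := Real.hasDerivAt_exp s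
  have hp : HasDerivAt (fun t : ℝ => 6 - t^2) (-(2*s)) s := by
    have h2 : HasDerivAt (fun t : ℝ => t^2) (2*s) s := by
      simpa using hasDerivAt_pow 2 s
    simpa using h2.const_sub 6
  have hq : HasDerivAt (fun t : ℝ => 6 + 6*t + 2*t^2) (6 + 4*s) s := by
    have h2 : HasDerivAt (fun t : ℝ => t^2) (2*s) s := by
      simpa using hasDerivAt_pow 2 s
    have h6 : HasDerivAt (fun t : ℝ => 6 + 6*t) (6:ℝ) s := by
      simpa using ((hasDerivAt_id s).const_mul (6:ℝ)).const_add (6:ℝ)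
    have := h6.add (h2.const_mul (2:ℝ))
    exact this.congr_deriv (by ring)
  have := hq.sub (hp.mul he)
  exact this.congr_deriv (by unfold GD.Kfun; ring)

lemma GD.hasDerivAt_K (s : ℝ) : HasDerivAt GD.Kfun (GD.Mfun s) s := by
  have he := Real.hasDerivAt_exp s
  have h2 : HasDerivAt (fun t : ℝ => t^2) (2*s) s := by
    simpa using hasDerivAt_pow 2 s
  have hp : HasDerivAt (fun t : ℝ => t^2 + 2*t - 6) (2*s + 2) s := by
    have := (h2.add ((hasDerivAt_id s).const_mul (2:ℝ))).sub (hasDerivAt_const s (6:ℝ))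
    exact this.congr_deriv (by ring)
  have hq : HasDerivAt (fun t : ℝ => 6 + 4*t) (4:ℝ) s := by
    simpa using ((hasDerivAt_id s).const_mul (4:ℝ)).const_add (6:ℝ)
  have := hq.add (hp.mul he)
  exact this.congr_deriv (by unfold GD.Mfun; ring)

lemma GD.continuous_H : Continuous GD.Hfun := by
  unfold GD.Hfun; fun_prop

lemma GD.M_nonneg (s : ℝ) : 0 ≤ GD.Mfun s := by
  have h1 := GD.one_sub_mul_exp_le s
  have h2 : 0 ≤ s^2 * Real.exp s := mul_nonneg (sq_nonneg s) (Real.exp_pos s).le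
  unfold GD.Mfun
  nlinarith

lemma GD.H_nonneg (s : ℝ) : 0 ≤ GD.Hfun s := by
  have hK : Monotone GD.Kfun := by
    apply monotone_of_deriv_nonneg
    · exact fun x => (GD.hasDerivAt_K x).differentiableAt
    · intro x
      rw [(GD.hasDerivAt_K x).deriv]
      exact GD.M_nonneg x
  have hK0 : GD.Kfun 0 = 0 := by unfold GD.Kfun; simp
  have hH0 : GD.Hfun 0 = 0 := by unfold GD.Hfun; simp
  rcases le_total 0 s with hs | hs
  · have hmono : MonotoneOn GD.Hfun (Set.Ici (0:ℝ)) := by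
      apply monotoneOn_of_deriv_nonneg (convex_Ici 0) GD.continuous_H.continuousOn
      · intro x _
        exact (GD.hasDerivAt_H x).differentiableAt.differentiableWithinAt
      · intro x hx
        rw [(GD.hasDerivAt_H x).deriv]
        have hx0 : (0:ℝ) ≤ x := le_of_lt (by simpa using hx)
        calc (0:ℝ) = GD.Kfun 0 := hK0.symm
          _ ≤ GD.Kfun x := hK hx0
    have := hmono Set.self_mem_Ici (show s ∈ Set.Ici (0:ℝ) from hs) hs
    linarith [hH0 ▸ this]
  · have hmono : AntitoneOn GD.Hfun (Set.Iic (0:ℝ)) := by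
      apply antitoneOn_of_deriv_nonpos (convex_Iic 0) GD.continuous_H.continuousOn
      · intro x _
        exact (GD.hasDerivAt_H x).differentiableAt.differentiableWithinAt
      · intro x hx
        rw [(GD.hasDerivAt_H x).deriv]
        have hx0 : x ≤ (0:ℝ) := le_of_lt (by simpa using hx)
        calc GD.Kfun x ≤ GD.Kfun 0 := hK hx0
          _ = 0 := hK0
    have := hmono (show s ∈ Set.Iic (0:ℝ) from hs) Set.self_mem_Iic hs
    linarith [hH0 ▸ this]

lemma GD.exp_quad_bound (s : ℝ) :
    Real.exp s ≤ 1 + s + s^2/3 + (s^2/6) * Real.exp s := by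
  have := GD.H_nonneg s
  unfold GD.Hfun at this
  nlinarith

/-! ### Auxiliary facts about the loss and its gradient -/

lemma GD.expLoss_nonneg {d N : ℕ} (x : Fin N → EuclideanSpace ℝ (Fin d))
    (w : EuclideanSpace ℝ (Fin d)) : 0 ≤ expLoss x w :=
  Finset.sum_nonneg fun _ _ => (Real.exp_pos _).le

lemma GD.grad_norm_le {d N : ℕ} (x : Fin N → EuclideanSpace ℝ (Fin d))
    (w : EuclideanSpace ℝ (Fin d)) (hx : ∀ n, ‖x n‖ ≤ 1) :
    ‖expLossGrad x w‖ ≤ expLoss x w := by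
  rw [expLossGrad, norm_neg]
  calc ‖∑ n, Real.exp (-⟪w, x n⟫) • x n‖ ≤ ∑ n, ‖Real.exp (-⟪w, x n⟫) • x n‖ :=
        norm_sum_le _ _
    _ ≤ ∑ n, Real.exp (-⟪w, x n⟫) := by
        apply Finset.sum_le_sum
        intro n _
        rw [norm_smul, Real.norm_eq_abs, abs_of_pos (Real.exp_pos _)]
        calc Real.exp (-⟪w, x n⟫) * ‖x n‖ ≤ Real.exp (-⟪w, x n⟫) * 1 :=
              mul_le_mul_of_nonneg_left (hx n) (Real.exp_pos _).le
          _ = Real.exp (-⟪w, x n⟫) := mul_one _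
    _ = expLoss x w := rfl

lemma GD.grad_inner_sum {d N : ℕ} (x : Fin N → EuclideanSpace ℝ (Fin d))
    (w : EuclideanSpace ℝ (Fin d)) :
    ∑ n, Real.exp (-⟪w, x n⟫) * ⟪expLossGrad x w, x n⟫ = -‖expLossGrad x w‖^2 := by
  have h1 : ∑ n, Real.exp (-⟪w, x n⟫) * ⟪expLossGrad x w, x n⟫
      = ⟪expLossGrad x w, ∑ n, Real.exp (-⟪w, x n⟫) • x n⟫ := by
    rw [inner_sum]
    exact Finset.sum_congr rfl fun n _ => (real_inner_smul_right _ _ _).symm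
  rw [h1]
  have h2 : (∑ n, Real.exp (-⟪w, x n⟫) • x n) = -expLossGrad x w := by
    rw [expLossGrad, neg_neg]
  rw [h2, inner_neg_right, real_inner_self_eq_norm_sq]

/-- The key one-step estimate: if `η L(w) ≤ 1`, then the loss does not increase and the
quantitative decrease bound holds. -/
lemma GD.one_step {d N : ℕ} (x : Fin N → EuclideanSpace ℝ (Fin d))
    (w : EuclideanSpace ℝ (Fin d)) (hx : ∀ n, ‖x n‖ ≤ 1) (η : ℝ) (hη : 0 < η)
    (hηL : η * expLoss x w ≤ 1) :
    expLoss x (w - η • expLossGrad x w) ≤ expLoss x w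
      ∧ expLoss x (w - η • expLossGrad x w) ≤
        expLoss x w - η * ‖expLossGrad x w‖^2
          + (η^2/2) * ‖expLossGrad x w‖^2 * expLoss x w := by
  set g := expLossGrad x w with hg
  set L := expLoss x w with hL
  set Lp := expLoss x (w - η • g) with hLp
  set A := ‖g‖^2 with hA
  have hA0 : 0 ≤ A := sq_nonneg _
  have hL0 : 0 ≤ L := GD.expLoss_nonneg x w
  have hLp0 : 0 ≤ Lp := GD.expLoss_nonneg x _
  have hAL : A ≤ L^2 := by
    rw [hA]
    have := GD.grad_norm_le x w hx
    nlinarith [norm_nonneg g]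
  have hinner : ∀ n : Fin N, -⟪w - η • g, x n⟫ = -⟪w, x n⟫ + η * ⟪g, x n⟫ := by
    intro n
    rw [inner_sub_left, real_inner_smul_left]
    ring
  have ha2 : ∀ n : Fin N, (η * ⟪g, x n⟫)^2 ≤ η^2 * A := by
    intro n
    have h1 : |⟪g, x n⟫| ≤ ‖g‖ := by
      calc |⟪g, x n⟫| ≤ ‖g‖ * ‖x n‖ := abs_real_inner_le_norm g (x n)
        _ ≤ ‖g‖ * 1 := mul_le_mul_of_nonneg_left (hx n) (norm_nonneg g)
        _ = ‖g‖ := mul_one _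
    have h2 : ⟪g, x n⟫^2 ≤ A := by
      rw [hA]
      nlinarith [abs_nonneg ⟪g, x n⟫, sq_abs ⟪g, x n⟫]
    calc (η * ⟪g, x n⟫)^2 = η^2 * ⟪g, x n⟫^2 := by ring
      _ ≤ η^2 * A := mul_le_mul_of_nonneg_left h2 (sq_nonneg η)
  have hper : ∀ n : Fin N, Real.exp (-⟪w - η • g, x n⟫) ≤
      Real.exp (-⟪w, x n⟫) + η * (Real.exp (-⟪w, x n⟫) * ⟪g, x n⟫)
        + (η^2 * A / 3) * Real.exp (-⟪w, x n⟫)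
        + (η^2 * A / 6) * Real.exp (-⟪w - η • g, x n⟫) := by
    intro n
    have hEpos : (0:ℝ) < Real.exp (-⟪w, x n⟫) := Real.exp_pos _
    have hrw : Real.exp (-⟪w - η • g, x n⟫)
        = Real.exp (-⟪w, x n⟫) * Real.exp (η * ⟪g, x n⟫) := by
      rw [hinner n, Real.exp_add]
    rw [hrw]
    set E := Real.exp (-⟪w, x n⟫) with hE
    set F := Real.exp (η * ⟪g, x n⟫) with hF
    have hFpos : (0:ℝ) < F := Real.exp_pos _
    have hq := GD.exp_quad_bound (η * ⟪g, x n⟫)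
    have hs2 := ha2 n
    have h1 : E * F ≤ E * (1 + η * ⟪g, x n⟫ + (η * ⟪g, x n⟫)^2/3
        + ((η * ⟪g, x n⟫)^2/6) * F) :=
      mul_le_mul_of_nonneg_left hq hEpos.le
    have h2 : E * (η * ⟪g, x n⟫)^2 ≤ E * (η^2 * A) :=
      mul_le_mul_of_nonneg_left hs2 hEpos.le
    have h3 : (E * F) * (η * ⟪g, x n⟫)^2 ≤ (E * F) * (η^2 * A) :=
      mul_le_mul_of_nonneg_left hs2 (mul_nonneg hEpos.le hFpos.le)
    nlinarith [h1, h2, h3]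
  have hstar : Lp ≤ L - η * A + (η^2 * A / 3) * L + (η^2 * A / 6) * Lp := by
    have hsum := Finset.sum_le_sum (fun n (_ : n ∈ Finset.univ) => hper n)
    have hexp : ∑ n, (Real.exp (-⟪w, x n⟫) + η * (Real.exp (-⟪w, x n⟫) * ⟪g, x n⟫)
        + (η^2 * A / 3) * Real.exp (-⟪w, x n⟫)
        + (η^2 * A / 6) * Real.exp (-⟪w - η • g, x n⟫))
        = L - η * A + (η^2 * A / 3) * L + (η^2 * A / 6) * Lp := by
      rw [Finset.sum_add_distrib, Finset.sum_add_distrib, Finset.sum_add_distrib,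
        ← Finset.mul_sum, ← Finset.mul_sum, ← Finset.mul_sum]
      rw [GD.grad_inner_sum x w]
      rw [hLp, hL, hA, expLoss, expLoss]
      ring
    calc Lp = ∑ n, Real.exp (-⟪w - η • g, x n⟫) := rfl
      _ ≤ _ := hsum
      _ = L - η * A + (η^2 * A / 3) * L + (η^2 * A / 6) * Lp := hexp
  have hη2A : η^2 * A ≤ 1 := by
    have h3 : 0 ≤ η * L := mul_nonneg hη.le hL0
    nlinarith [mul_le_mul hηL hηL h3 zero_le_one, mul_le_mul_of_nonneg_left hAL (sq_nonneg η)]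
  have hkey : η^2 * A * L ≤ η * A := by
    have := mul_le_mul_of_nonneg_left hηL (mul_nonneg hη.le hA0)
    nlinarith [this]
  have hetaA : 0 ≤ η * A := mul_nonneg hη.le hA0
  have hmono : Lp ≤ L := by
    by_contra hcon
    push_neg at hcon
    have h1 : η^2 * A * (Lp - L) ≤ 1 * (Lp - L) :=
      mul_le_mul_of_nonneg_right hη2A (by linarith)
    nlinarith [hstar, h1, hkey, hetaA]
  refine ⟨hmono, ?_⟩
  have h2 : 0 ≤ η^2 * A * (L - Lp) :=
    mul_nonneg (mul_nonneg (sq_nonneg η) hA0) (by linarith)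
  nlinarith [hstar, h2]

/-- One-step loss decrease of gradient descent on the exponential loss:
`L(w(t+1)) ≤ L(w(t)) − η‖∇L(w(t))‖² + (η²/2)‖∇L(w(t))‖² L(w(t))`. -/
theorem gd_expLoss_one_step_decrease
    {d N : ℕ} (x : Fin N → EuclideanSpace ℝ (Fin d))
    (hx : ∀ n, ‖x n‖ ≤ 1)
    (hsep : ∃ wstar : EuclideanSpace ℝ (Fin d), ∀ n, 0 < ⟪wstar, x n⟫)
    (η : ℝ) (w : ℕ → EuclideanSpace ℝ (Fin d))
    (hη : 0 < η) (hη' : η < 1 / expLoss x (w 0))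
    (hGD : ∀ t : ℕ, w (t + 1) = w t - η • expLossGrad x (w t)) :
    ∀ t : ℕ, expLoss x (w (t + 1)) ≤
      expLoss x (w t) - η * ‖expLossGrad x (w t)‖ ^ 2
        + (η ^ 2 / 2) * ‖expLossGrad x (w t)‖ ^ 2 * expLoss x (w t) := by
  have hL0pos : 0 < expLoss x (w 0) := by
    rcases lt_or_eq_of_le (GD.expLoss_nonneg x (w 0)) with h | h
    · exact h
    · exfalso
      rw [← h, div_zero] at hη'
      linarith
  have hηL0 : η * expLoss x (w 0) < 1 := by
    rw [lt_div_iff₀ hL0pos] at hη'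
    linarith
  have hbound : ∀ t : ℕ, expLoss x (w t) ≤ expLoss x (w 0) := by
    intro t
    induction t with
    | zero => exact le_refl _
    | succ t ih =>
      have hηL : η * expLoss x (w t) ≤ 1 := by
        have : η * expLoss x (w t) ≤ η * expLoss x (w 0) :=
          mul_le_mul_of_nonneg_left ih hη.le
        linarith
      have := (GD.one_step x (w t) hx η hη hηL).1
      rw [← hGD t] at this
      exact le_trans this ih
  intro t
  have hηL : η * expLoss x (w t) ≤ 1 := by
    have : η * expLoss x (w t) ≤ η * expLoss x (w 0) :=
      mul_le_mul_of_nonneg_left (hbound t) hη.le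
    linarith
  have := (GD.one_step x (w t) hx η hη hηL).2
  rw [← hGD t] at this
  exact this
end

section
/- Linear (1/t) convergence of the exponential loss under gradient descent: if the fixed step size satisfies 0 < η < 1/L(w(0)), then for every t ≥ 0, L(w(t+1)) ≤ 1 / (ηγ²(t+1) + 1/L(w(0))). -/
set_option maxHeartbeats 2000000

open scoped RealInnerProductSpace BigOperators
open Filter

private lemma exp_le_one_add_add_sq {y : ℝ} (hy : |y| ≤ 1) :
    Real.exp y ≤ 1 + y + y ^ 2 := by
  have h := Real.exp_bound hy (n := 2) (by norm_num)
  have h2 : ∑ m ∈ Finset.range 2, y ^ m / (m.factorial : ℝ) = 1 + y := by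
    simp [Finset.sum_range_succ]
  rw [h2] at h
  have h3 := (abs_le.mp h).2
  have hy2 : |y| ^ 2 = y ^ 2 := sq_abs y
  rw [hy2] at h3
  norm_num at h3
  nlinarith [sq_nonneg y]

private lemma key_step {d N : ℕ} (x : Fin N → EuclideanSpace ℝ (Fin d))
    (hx : ∀ n, ‖x n‖ ≤ 1)
    (hNe : (Finset.univ : Finset (Fin N)).Nonempty)
    (u : EuclideanSpace ℝ (Fin d)) (hu : ‖u‖ = 1)
    (γ : ℝ) (hγ0 : 0 ≤ γ) (hγu : ∀ n, γ ≤ ⟪u, x n⟫)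
    (η : ℝ) (hη : 0 < η) (wc : EuclideanSpace ℝ (Fin d))
    (hηL : η * expLoss x wc ≤ 1) :
    (expLoss x wc)⁻¹ + η * γ ^ 2 ≤
      (expLoss x (wc + η • ∑ n, Real.exp (-⟪wc, x n⟫) • x n))⁻¹ := by

  set E : Fin N → ℝ := fun n => Real.exp (-⟪wc, x n⟫) with hEdef
  have hE : ∀ n, 0 < E n := fun n => Real.exp_pos _
  set g : EuclideanSpace ℝ (Fin d) := ∑ n, E n • x n with hgdef
  set b : Fin N → ℝ := fun n => ⟪g, x n⟫ with hbdef
  set F : ℝ → ℝ := fun s => ∑ n, E n * Real.exp (-(s * b n)) with hFdef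
  set V : ℝ → ℝ := fun s => ∑ n, E n * b n * Real.exp (-(s * b n)) with hVdef
  set W : ℝ → ℝ := fun s => ∑ n, E n * b n ^ 2 * Real.exp (-(s * b n)) with hWdef
  set Gv : ℝ → EuclideanSpace ℝ (Fin d) :=
    fun s => ∑ n, (E n * Real.exp (-(s * b n))) • x n with hGvdef
  -- basic facts
  have hS : F 0 = ∑ n, E n := by
    simp only [hFdef, zero_mul, neg_zero, Real.exp_zero, mul_one]
  have hF0 : F 0 = expLoss x wc := by
    rw [hS]; rfl
  have hFpos : ∀ s, 0 < F s := by
    intro s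
    exact Finset.sum_pos (fun n _ => mul_pos (hE n) (Real.exp_pos _)) hNe
  have hFw : ∀ s : ℝ, expLoss x (wc + s • g) = F s := by
    intro s
    unfold expLoss
    refine Finset.sum_congr rfl fun n _ => ?_
    rw [inner_add_left, real_inner_smul_left, neg_add]
    rw [Real.exp_add]
  have hG2 : ∑ n, E n * b n = ‖g‖ ^ 2 := by
    have h1 : (⟪g, g⟫ : ℝ) = ∑ n, E n * b n := by
      calc (⟪g, g⟫ : ℝ) = ⟪g, ∑ n, E n • x n⟫ := by rw [← hgdef]
      _ = ∑ n, ⟪g, E n • x n⟫ := inner_sum _ _ _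
      _ = ∑ n, E n * b n := by
          refine Finset.sum_congr rfl fun n _ => ?_
          rw [real_inner_smul_right]
    rw [← h1, real_inner_self_eq_norm_sq]
  have hgF : ‖g‖ ≤ F 0 := by
    rw [hS]
    calc ‖g‖ ≤ ∑ n, ‖E n • x n‖ := norm_sum_le _ _
    _ ≤ ∑ n, E n := by
        refine Finset.sum_le_sum fun n _ => ?_
        rw [norm_smul, Real.norm_eq_abs, abs_of_pos (hE n)]
        nlinarith [hx n, (hE n).le, norm_nonneg (x n)]
  have hb : ∀ n, |b n| ≤ ‖g‖ := by
    intro n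
    refine (abs_real_inner_le_norm g (x n)).trans ?_
    nlinarith [norm_nonneg g, hx n]
  have hηF0 : η * F 0 ≤ 1 := by rw [hF0]; exact hηL
  -- descent: F s ≤ F 0 on [0, η]
  have hFle : ∀ s ∈ Set.Icc (0:ℝ) η, F s ≤ F 0 := by
    intro s hs
    obtain ⟨hs0, hsη⟩ := hs
    have hsF : s * F 0 ≤ 1 :=
      le_trans (mul_le_mul_of_nonneg_right hsη (hFpos 0).le) hηF0
    have hterm : ∀ n ∈ Finset.univ, E n * Real.exp (-(s * b n)) ≤
        E n * (1 - s * b n + (s * b n) ^ 2) := by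
      intro n _
      refine mul_le_mul_of_nonneg_left ?_ (hE n).le
      have habs : |(-(s * b n))| ≤ 1 := by
        rw [abs_neg, abs_mul, abs_of_nonneg hs0]
        calc s * |b n| ≤ s * F 0 := by
              refine mul_le_mul_of_nonneg_left ((hb n).trans hgF) hs0
        _ ≤ 1 := hsF
      have := exp_le_one_add_add_sq habs
      nlinarith [this]
    have hsum : ∑ n, E n * (1 - s * b n + (s * b n) ^ 2) =
        F 0 - s * (∑ n, E n * b n) + s ^ 2 * (∑ n, E n * b n ^ 2) := by
      rw [hS, Finset.mul_sum, Finset.mul_sum, ← Finset.sum_sub_distrib,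
        ← Finset.sum_add_distrib]
      refine Finset.sum_congr rfl fun n _ => by ring
    have hEb2 : ∑ n, E n * b n ^ 2 ≤ ‖g‖ ^ 2 * F 0 := by
      rw [hS, Finset.mul_sum]
      refine Finset.sum_le_sum fun n _ => ?_
      have h1 : b n ^ 2 ≤ ‖g‖ ^ 2 := by
        have := hb n; nlinarith [abs_nonneg (b n), sq_abs (b n)]
      nlinarith [(hE n).le]
    have h2 : F s ≤ F 0 - s * ‖g‖ ^ 2 + s ^ 2 * (‖g‖ ^ 2 * F 0) := by
      calc F s ≤ ∑ n, E n * (1 - s * b n + (s * b n) ^ 2) := Finset.sum_le_sum hterm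
      _ = F 0 - s * (∑ n, E n * b n) + s ^ 2 * (∑ n, E n * b n ^ 2) := hsum
      _ ≤ F 0 - s * ‖g‖ ^ 2 + s ^ 2 * (‖g‖ ^ 2 * F 0) := by
          rw [hG2]
          nlinarith [sq_nonneg s, hEb2]
    nlinarith [sq_nonneg ‖g‖, mul_nonneg hs0 (sq_nonneg ‖g‖)]
  -- derivatives
  have hder : ∀ (c : Fin N → ℝ) (s : ℝ),
      HasDerivAt (fun σ => ∑ n, c n * Real.exp (-(σ * b n)))
        (∑ n, -(c n * b n * Real.exp (-(s * b n)))) s := by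
    intro c s
    refine HasDerivAt.fun_sum fun n _ => ?_
    have h1 : HasDerivAt (fun σ : ℝ => -(σ * b n)) (-(b n)) s :=
      (hasDerivAt_mul_const (b n)).neg
    have h2 := (h1.exp).const_mul (c n)
    refine h2.congr_deriv ?_
    ring
  have hFder : ∀ s, HasDerivAt F (-V s) s := by
    intro s
    have h1 := hder E s
    have h2 : ∑ n, -(E n * b n * Real.exp (-(s * b n))) = -V s :=
      Finset.sum_neg_distrib _
    rw [← h2]
    exact h1
  have hnegVder : ∀ s, HasDerivAt (fun σ => -V σ) (W s) s := by
    intro s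
    have h1 : HasDerivAt V (∑ n, -(E n * b n * b n * Real.exp (-(s * b n)))) s :=
      hder (fun n => E n * b n) s
    have h2 := h1.neg
    have h3 : -(∑ n, -(E n * b n * b n * Real.exp (-(s * b n)))) = W s := by
      rw [Finset.sum_neg_distrib, neg_neg, hWdef]
      exact Finset.sum_congr rfl fun n _ => by ring
    rw [← h3]
    exact h2
  have hscal : ∀ (c k : ℝ) (s : ℝ), HasDerivAt (fun σ : ℝ => c * Real.exp (-(σ * k)))
      (-(c * k * Real.exp (-(s * k)))) s := by
    intro c k s
    have h1 : HasDerivAt (fun σ : ℝ => -(σ * k)) (-k) s := (hasDerivAt_mul_const k).neg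
    have h2 := (h1.exp).const_mul c
    refine h2.congr_deriv ?_
    ring
  set hvec : ℝ → EuclideanSpace ℝ (Fin d) :=
    fun s => ∑ n, (E n * b n * Real.exp (-(s * b n))) • x n with hhvecdef
  have hnegGvder : ∀ s, HasDerivAt (fun σ => -Gv σ) (hvec s) s := by
    intro s
    have h1 : HasDerivAt Gv (∑ n, (-(E n * b n * Real.exp (-(s * b n)))) • x n) s :=
      HasDerivAt.fun_sum fun n _ => (hscal (E n) (b n) s).smul_const (x n)
    have h2 := h1.neg
    have h3 : -(∑ n, (-(E n * b n * Real.exp (-(s * b n)))) • x n) = hvec s := by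
      rw [hhvecdef]
      rw [← Finset.sum_neg_distrib]
      exact Finset.sum_congr rfl fun n _ => by rw [neg_smul, neg_neg]
    rw [← h3]
    exact h2
  have hcontscal : ∀ (c k : ℝ), Continuous (fun σ : ℝ => c * Real.exp (-(σ * k))) := by
    intro c k
    fun_prop
  have hWcont : Continuous W := by
    rw [hWdef]
    exact continuous_finset_sum _ fun n _ => hcontscal (E n * b n ^ 2) (b n)
  have hveccont : Continuous hvec := by
    rw [hhvecdef]
    exact continuous_finset_sum _ fun n _ =>
      (hcontscal (E n * b n) (b n)).smul continuous_const
  have hWnn : ∀ σ, 0 ≤ W σ := by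
    intro σ
    refine Finset.sum_nonneg fun n _ => ?_
    have := (hE n).le
    positivity
  have hV0 : V 0 = ‖g‖ ^ 2 := by
    rw [← hG2, hVdef]
    simp
  have hGv0 : Gv 0 = g := by
    rw [hGvdef, hgdef]
    simp
  -- the core inequality
  have hVlow : ∀ s, 0 < s → s ≤ η → γ ^ 2 * F s ^ 2 ≤ V s := by
    intro s hs0 hsη
    set D : ℝ := ‖g‖ ^ 2 - V s with hDdef
    have hWint : ∫ σ in (0:ℝ)..s, W σ = D := by
      have h1 := intervalIntegral.integral_eq_sub_of_hasDerivAt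
        (f := fun σ => -V σ) (f' := W) (fun σ _ => hnegVder σ)
        (hWcont.intervalIntegrable 0 s)
      have h2 : ∫ σ in (0:ℝ)..s, W σ = -V s - -V 0 := h1
      rw [h2, hV0, hDdef]
      ring
    have hDnn : 0 ≤ D := by
      rw [← hWint]
      exact intervalIntegral.integral_nonneg hs0.le fun σ _ => hWnn σ
    have hρint : ∫ σ in (0:ℝ)..s, hvec σ = g - Gv s := by
      have h1 := intervalIntegral.integral_eq_sub_of_hasDerivAt
        (f := fun σ => -Gv σ) (f' := hvec) (fun σ _ => hnegGvder σ)
        (hveccont.intervalIntegrable 0 s)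
      have h2 : ∫ σ in (0:ℝ)..s, hvec σ = -Gv s - -Gv 0 := h1
      rw [h2, hGv0]
      abel
    have hsF : s * F 0 ≤ 1 :=
      le_trans (mul_le_mul_of_nonneg_right hsη (hFpos 0).le) hηF0
    -- norm bound for each c > 0
    have hnormρ : ∀ c : ℝ, 0 < c →
        ‖g - Gv s‖ ≤ Real.sqrt (F 0) * (D / c + c * s) / 2 := by
      intro c hc
      have hptw : ∀ σ ∈ Set.Icc (0:ℝ) s, ‖hvec σ‖ ≤
          Real.sqrt (F 0) / (2 * c) * W σ + Real.sqrt (F 0) * c / 2 := by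
        intro σ hσ
        have hσIcc : σ ∈ Set.Icc (0:ℝ) η := ⟨hσ.1, hσ.2.trans hsη⟩
        set T : ℝ := ∑ n, E n * |b n| * Real.exp (-(σ * b n)) with hTdef
        have hTnn : 0 ≤ T := by
          refine Finset.sum_nonneg fun n _ => ?_
          have := (hE n).le
          positivity
        have h1 : ‖hvec σ‖ ≤ T := by
          rw [hhvecdef, hTdef]
          refine (norm_sum_le _ _).trans (Finset.sum_le_sum fun n _ => ?_)
          rw [norm_smul, Real.norm_eq_abs, abs_mul, abs_mul,
            abs_of_pos (hE n), abs_of_pos (Real.exp_pos _)]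
          have h2 : E n * |b n| * Real.exp (-(σ * b n)) * ‖x n‖ ≤
              E n * |b n| * Real.exp (-(σ * b n)) * 1 := by
            refine mul_le_mul_of_nonneg_left (hx n) ?_
            have := (hE n).le
            positivity
          calc E n * |b n| * Real.exp (-(σ * b n)) * ‖x n‖ ≤
              E n * |b n| * Real.exp (-(σ * b n)) * 1 := h2
          _ = E n * |b n| * Real.exp (-(σ * b n)) := by ring
        have h2 : T ^ 2 ≤ F σ * W σ := by
          have hcs := Finset.sum_mul_sq_le_sq_mul_sq Finset.univ
            (fun n => Real.sqrt (E n * Real.exp (-(σ * b n))))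
            (fun n => Real.sqrt (E n * Real.exp (-(σ * b n))) * |b n|)
          have e1 : ∀ n : Fin N, Real.sqrt (E n * Real.exp (-(σ * b n))) *
              (Real.sqrt (E n * Real.exp (-(σ * b n))) * |b n|) =
              E n * |b n| * Real.exp (-(σ * b n)) := by
            intro n
            have hnn : (0:ℝ) ≤ E n * Real.exp (-(σ * b n)) := by
              have := (hE n).le
              positivity
            calc Real.sqrt (E n * Real.exp (-(σ * b n))) *
                (Real.sqrt (E n * Real.exp (-(σ * b n))) * |b n|) =
                (Real.sqrt (E n * Real.exp (-(σ * b n))) *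
                  Real.sqrt (E n * Real.exp (-(σ * b n)))) * |b n| := by ring
            _ = (E n * Real.exp (-(σ * b n))) * |b n| := by rw [Real.mul_self_sqrt hnn]
            _ = E n * |b n| * Real.exp (-(σ * b n)) := by ring
          have e2 : ∀ n : Fin N, Real.sqrt (E n * Real.exp (-(σ * b n))) ^ 2 =
              E n * Real.exp (-(σ * b n)) := by
            intro n
            refine Real.sq_sqrt ?_
            have := (hE n).le
            positivity
          have e3 : ∀ n : Fin N, (Real.sqrt (E n * Real.exp (-(σ * b n))) * |b n|) ^ 2 =
              E n * b n ^ 2 * Real.exp (-(σ * b n)) := by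
            intro n
            rw [mul_pow, e2 n, sq_abs]
            ring
          rw [Finset.sum_congr rfl (fun n _ => e1 n),
            Finset.sum_congr rfl (fun n _ => e2 n),
            Finset.sum_congr rfl (fun n _ => e3 n)] at hcs
          exact hcs
        have h3 : T ^ 2 ≤ F 0 * W σ :=
          h2.trans (mul_le_mul_of_nonneg_right (hFle σ hσIcc) (hWnn σ))
        have h4 : T ≤ Real.sqrt (F 0) * Real.sqrt (W σ) := by
          rw [← Real.sqrt_mul (hFpos 0).le]
          exact (Real.le_sqrt hTnn (by positivity)).mpr h3
        have h5 : Real.sqrt (W σ) ≤ (W σ / c + c) / 2 := by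
          have hsq := Real.sq_sqrt (hWnn σ)
          have hnn := Real.sqrt_nonneg (W σ)
          have key : 2 * c * Real.sqrt (W σ) ≤ W σ + c ^ 2 := by
            nlinarith [sq_nonneg (Real.sqrt (W σ) - c)]
          rw [← sub_nonneg]
          have heq : (W σ / c + c) / 2 - Real.sqrt (W σ) =
              (W σ + c ^ 2 - 2 * c * Real.sqrt (W σ)) / (2 * c) := by
            field_simp
          rw [heq]
          exact div_nonneg (by linarith) (by positivity)
        calc ‖hvec σ‖ ≤ T := h1
        _ ≤ Real.sqrt (F 0) * Real.sqrt (W σ) := h4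
        _ ≤ Real.sqrt (F 0) * ((W σ / c + c) / 2) := by
            refine mul_le_mul_of_nonneg_left h5 (Real.sqrt_nonneg _)
        _ = Real.sqrt (F 0) / (2 * c) * W σ + Real.sqrt (F 0) * c / 2 := by
            field_simp
      rw [← hρint]
      calc ‖∫ σ in (0:ℝ)..s, hvec σ‖ ≤ ∫ σ in (0:ℝ)..s, ‖hvec σ‖ :=
          intervalIntegral.norm_integral_le_integral_norm hs0.le
      _ ≤ ∫ σ in (0:ℝ)..s,
          (Real.sqrt (F 0) / (2 * c) * W σ + Real.sqrt (F 0) * c / 2) := by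
          refine intervalIntegral.integral_mono_on hs0.le
            (hveccont.norm.intervalIntegrable 0 s) ?_ hptw
          exact ((continuous_const.mul hWcont).add continuous_const).intervalIntegrable 0 s
      _ = Real.sqrt (F 0) / (2 * c) * D + Real.sqrt (F 0) * c / 2 * s := by
          rw [intervalIntegral.integral_add (f := fun σ => Real.sqrt (F 0) / (2 * c) * W σ)
            (g := fun _ => Real.sqrt (F 0) * c / 2)
            ((continuous_const.mul hWcont).intervalIntegrable 0 s)
            (continuous_const.intervalIntegrable 0 s),
            intervalIntegral.integral_const_mul, hWint,
            intervalIntegral.integral_const]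
          simp [smul_eq_mul]
          ring
      _ = Real.sqrt (F 0) * (D / c + c * s) / 2 := by
          field_simp
    -- conclude ‖ρ‖² ≤ D
    have hρD : ‖g - Gv s‖ ^ 2 ≤ D := by
      rcases eq_or_lt_of_le hDnn with hD0 | hDpos
      · -- D = 0 : show norm is 0
        have hsqnn : (0:ℝ) ≤ Real.sqrt (F 0) := Real.sqrt_nonneg _
        have hz : ‖g - Gv s‖ ≤ 0 := by
          refine le_of_forall_pos_le_add fun ε hε => ?_
          have hden : (0:ℝ) < Real.sqrt (F 0) * s + 1 := by nlinarith
          have hc : (0:ℝ) < 2 * ε / (Real.sqrt (F 0) * s + 1) :=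
            div_pos (by linarith) hden
          have h2 := hnormρ _ hc
          rw [← hD0, zero_div, zero_add] at h2
          calc ‖g - Gv s‖ ≤ Real.sqrt (F 0) * (2 * ε / (Real.sqrt (F 0) * s + 1) * s) / 2 := h2
          _ = ε * (Real.sqrt (F 0) * s) / (Real.sqrt (F 0) * s + 1) := by ring
          _ ≤ ε := by
              rw [div_le_iff₀ hden]
              nlinarith [hε, mul_nonneg hsqnn hs0.le]
          _ = 0 + ε := by ring
        have hz2 : ‖g - Gv s‖ = 0 := le_antisymm hz (norm_nonneg _)
        rw [hz2, ← hD0]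
        norm_num
      · -- D > 0
        set c : ℝ := Real.sqrt (D / s) with hcdef
        have hc : 0 < c := Real.sqrt_pos.mpr (div_pos hDpos hs0)
        have hc2 : c ^ 2 = D / s := Real.sq_sqrt (div_pos hDpos hs0).le
        have hc2s : c ^ 2 * s = D := by
          rw [hc2]
          field_simp
        have h1 := hnormρ c hc
        have h2 : D / c + c * s = 2 * D / c := by
          field_simp
          nlinarith [hc2s]
        rw [h2] at h1
        have h3 : ‖g - Gv s‖ ^ 2 ≤ (Real.sqrt (F 0) * (2 * D / c) / 2) ^ 2 := by
          refine pow_le_pow_left₀ (norm_nonneg _) h1 2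
        have h4 : (Real.sqrt (F 0) * (2 * D / c) / 2) ^ 2 = F 0 * (D ^ 2 / c ^ 2) := by
          have he : Real.sqrt (F 0) * (2 * D / c) / 2 = Real.sqrt (F 0) * (D / c) := by
            ring
          rw [he, mul_pow, Real.sq_sqrt (hFpos 0).le, div_pow]
        have h5 : D ^ 2 / c ^ 2 = s * D := by
          rw [hc2]
          field_simp
        have h6 : F 0 * (s * D) ≤ D := by
          nlinarith [hsF, hDpos, (hFpos 0).le]
        calc ‖g - Gv s‖ ^ 2 ≤ F 0 * (D ^ 2 / c ^ 2) := by rw [← h4]; exact h3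
        _ = F 0 * (s * D) := by rw [h5]
        _ ≤ D := h6
    -- chain of inequalities
    have hVinner : V s = ⟪g, Gv s⟫ := by
      have h1 : (⟪g, Gv s⟫ : ℝ) = ∑ n, (E n * Real.exp (-(s * b n))) * b n := by
        rw [hGvdef]
        rw [inner_sum]
        refine Finset.sum_congr rfl fun n _ => ?_
        rw [real_inner_smul_right]
      rw [h1, hVdef]
      exact Finset.sum_congr rfl fun n _ => by ring
    have hρsq : ‖g - Gv s‖ ^ 2 = ‖g‖ ^ 2 - 2 * ⟪g, Gv s⟫ + ‖Gv s‖ ^ 2 :=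
      norm_sub_sq_real g (Gv s)
    have hE' : ‖Gv s‖ ^ 2 ≤ V s := by
      rw [hρsq, ← hVinner] at hρD
      rw [hDdef] at hρD
      linarith
    have hmargin : γ * F s ≤ ⟪u, Gv s⟫ := by
      have h1 : (⟪u, Gv s⟫ : ℝ) = ∑ n, (E n * Real.exp (-(s * b n))) * ⟪u, x n⟫ := by
        rw [hGvdef, inner_sum]
        refine Finset.sum_congr rfl fun n _ => ?_
        rw [real_inner_smul_right]
      rw [h1]
      have h2 : γ * F s = ∑ n, (E n * Real.exp (-(s * b n))) * γ := by
        simp only [hFdef]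
        rw [Finset.mul_sum]
        exact Finset.sum_congr rfl fun n _ => by ring
      rw [h2]
      refine Finset.sum_le_sum fun n _ => ?_
      refine mul_le_mul_of_nonneg_left (hγu n) ?_
      have := (hE n).le
      positivity
    have huG : (⟪u, Gv s⟫ : ℝ) ≤ ‖Gv s‖ := by
      have h1 := real_inner_le_norm u (Gv s)
      rwa [hu, one_mul] at h1
    have hsq : (γ * F s) ^ 2 ≤ ‖Gv s‖ ^ 2 :=
      pow_le_pow_left₀ (mul_nonneg hγ0 (hFpos s).le) (hmargin.trans huG) 2
    calc γ ^ 2 * F s ^ 2 = (γ * F s) ^ 2 := by ring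
    _ ≤ ‖Gv s‖ ^ 2 := hsq
    _ ≤ V s := hE'
  -- derivative of the potential and monotonicity
  have hFdiff : Differentiable ℝ F := fun s => (hFder s).differentiableAt
  have hΨder : ∀ s, HasDerivAt (fun σ => (F σ)⁻¹ - γ ^ 2 * σ)
      (V s / F s ^ 2 - γ ^ 2) s := by
    intro s
    have h1 := (hFder s).inv (hFpos s).ne'
    have h2 : -(-V s) / F s ^ 2 = V s / F s ^ 2 := by rw [neg_neg]
    rw [h2] at h1
    have h3 : HasDerivAt (fun σ : ℝ => γ ^ 2 * σ) (γ ^ 2) s := by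
      have h4 := (hasDerivAt_id s).const_mul (γ ^ 2)
      rwa [mul_one] at h4
    exact h1.sub h3
  have hmono : MonotoneOn (fun σ => (F σ)⁻¹ - γ ^ 2 * σ) (Set.Icc 0 η) := by
    refine monotoneOn_of_deriv_nonneg (convex_Icc 0 η) ?_ ?_ ?_
    · refine Continuous.continuousOn ?_
      exact (hFdiff.continuous.inv₀ fun s => (hFpos s).ne').sub
        (continuous_const.mul continuous_id)
    · intro s _
      exact ((hΨder s).differentiableAt).differentiableWithinAt
    · intro s hs
      rw [interior_Icc] at hs
      rw [(hΨder s).deriv]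
      have h1 := hVlow s hs.1 hs.2.le
      have h2 : (0:ℝ) < F s ^ 2 := pow_pos (hFpos s) 2
      rw [sub_nonneg, le_div_iff₀ h2]
      linarith
  have hfin := hmono (Set.left_mem_Icc.mpr hη.le) (Set.right_mem_Icc.mpr hη.le) hη.le
  simp only [mul_zero, sub_zero] at hfin
  rw [← hF0, hFw η]
  linarith

/-- `1/t` linear convergence of the exponential loss under gradient descent:
`L(w(t+1)) ≤ 1 / (ηγ²(t+1) + 1/L(w(0)))`. -/
theorem gd_expLoss_loss_rate
    {d N : ℕ} (x : Fin N → EuclideanSpace ℝ (Fin d))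
    (hx : ∀ n, ‖x n‖ ≤ 1)
    (hsep : ∃ wstar : EuclideanSpace ℝ (Fin d), ∀ n, 0 < ⟪wstar, x n⟫)
    (hNe : (Finset.univ : Finset (Fin N)).Nonempty)
    (γ : ℝ)
    (hγ : IsGreatest {m : ℝ | ∃ u : EuclideanSpace ℝ (Fin d), ‖u‖ = 1 ∧
        m = Finset.univ.inf' hNe (fun n => ⟪u, x n⟫)} γ)
    (η : ℝ) (w : ℕ → EuclideanSpace ℝ (Fin d))
    (hη : 0 < η) (hη' : η < 1 / expLoss x (w 0))
    (hGD : ∀ t : ℕ, w (t + 1) = w t - η • expLossGrad x (w t)) :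
    ∀ t : ℕ, expLoss x (w (t + 1)) ≤
      1 / (η * γ ^ 2 * (t + 1) + 1 / expLoss x (w 0)) := by
  obtain ⟨⟨u, hu1, hγeq⟩, hub⟩ := hγ
  have hγu : ∀ n, γ ≤ ⟪u, x n⟫ := by
    intro n
    rw [hγeq]
    exact Finset.inf'_le _ (Finset.mem_univ n)
  have hγpos : 0 < γ := by
    obtain ⟨ws, hws⟩ := hsep
    obtain ⟨n₀, -⟩ := id hNe
    have hws0 : ws ≠ 0 := by
      intro h
      have h2 := hws n₀
      rw [h, inner_zero_left] at h2
      exact lt_irrefl _ h2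
    have hnorm : 0 < ‖ws‖ := norm_pos_iff.mpr hws0
    have hu'1 : ‖(‖ws‖⁻¹ • ws : EuclideanSpace ℝ (Fin d))‖ = 1 := by
      rw [norm_smul, norm_inv, norm_norm, inv_mul_cancel₀ hnorm.ne']
    have hpos : 0 < Finset.univ.inf' hNe
        fun n => (⟪(‖ws‖⁻¹ • ws : EuclideanSpace ℝ (Fin d)), x n⟫ : ℝ) := by
      rw [Finset.lt_inf'_iff]
      intro n _
      rw [real_inner_smul_left]
      exact mul_pos (inv_pos.mpr hnorm) (hws n)
    exact lt_of_lt_of_le hpos (hub ⟨_, hu'1, rfl⟩)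
  have hLpos : ∀ t, 0 < expLoss x (w t) := fun t =>
    Finset.sum_pos (fun n _ => Real.exp_pos _) hNe
  have hηL0 : η * expLoss x (w 0) < 1 := (lt_div_iff₀ (hLpos 0)).mp hη'
  have hstep : ∀ t : ℕ, η * expLoss x (w t) ≤ 1 →
      (expLoss x (w t))⁻¹ + η * γ ^ 2 ≤ (expLoss x (w (t + 1)))⁻¹ := by
    intro t h
    have hks := key_step x hx hNe u hu1 γ hγpos.le hγu η hη (w t) h
    have heq : w (t + 1) = w t + η • ∑ n, Real.exp (-⟪w t, x n⟫) • x n := by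
      rw [hGD t, expLossGrad, smul_neg, sub_neg_eq_add]
    rw [heq]
    exact hks
  have H : ∀ t : ℕ, η * γ ^ 2 * (t : ℝ) + (expLoss x (w 0))⁻¹ ≤
      (expLoss x (w t))⁻¹ := by
    intro t
    induction t with
    | zero => simp
    | succ t ih =>
      have htnn : (0:ℝ) ≤ η * γ ^ 2 * (t : ℝ) :=
        mul_nonneg (mul_nonneg hη.le (sq_nonneg γ)) (Nat.cast_nonneg t)
      have h1 : (expLoss x (w 0))⁻¹ ≤ (expLoss x (w t))⁻¹ := by linarith
      have h2 : expLoss x (w t) ≤ expLoss x (w 0) := by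
        have h3 := inv_anti₀ (inv_pos.mpr (hLpos 0)) h1
        rwa [inv_inv, inv_inv] at h3
      have hη1 : η * expLoss x (w t) ≤ 1 :=
        le_trans (mul_le_mul_of_nonneg_left h2 hη.le) hηL0.le
      have h4 := hstep t hη1
      push_cast
      calc η * γ ^ 2 * ((t : ℝ) + 1) + (expLoss x (w 0))⁻¹
          = (η * γ ^ 2 * (t : ℝ) + (expLoss x (w 0))⁻¹) + η * γ ^ 2 := by ring
      _ ≤ (expLoss x (w t))⁻¹ + η * γ ^ 2 := by linarith
      _ ≤ (expLoss x (w (t + 1)))⁻¹ := h4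
  intro t
  have h1 := H (t + 1)
  push_cast at h1
  have hBpos : 0 < η * γ ^ 2 * ((t : ℝ) + 1) + (expLoss x (w 0))⁻¹ := by
    have h2 : (0:ℝ) < (expLoss x (w 0))⁻¹ := inv_pos.mpr (hLpos 0)
    have h3 : (0:ℝ) ≤ η * γ ^ 2 * ((t : ℝ) + 1) := by positivity
    linarith
  have h5 := inv_anti₀ hBpos h1
  rw [inv_inv] at h5
  simp only [one_div]
  exact h5
end

section
/- Logarithmic growth of the iterate norm for gradient descent on the exponential loss: if the fixed step size satisfies 0 < η < 1/L(w(0)), then for every t ≥ 0, ‖w(t+1)‖ ≥ log(ηγ²(t+1) + 1/L(w(0))). -/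
open scoped RealInnerProductSpace BigOperators
open Filter

lemma exp_cubic_bound {c : ℝ} (hc : |c| ≤ 1) :
    (1 - Real.exp (-c))^2 ≤ ((1 - Real.exp (-c)) * c) * (1 - c/2 + (2/9)*c^2) := by
  have hb := Real.exp_bound (x := -c) (by rwa [abs_neg]) (n := 3) (by norm_num)
  have hsum : ∑ m ∈ Finset.range 3, (-c) ^ m / (m.factorial : ℝ) = 1 - c + c^2/2 := by
    simp [Finset.sum_range_succ, Nat.factorial]
    ring
  rw [hsum, abs_neg] at hb
  have hb' : |Real.exp (-c) - (1 - c + c ^ 2 / 2)| ≤ |c| ^ 3 * (2/9) := by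
    convert hb using 2
    norm_num [Nat.factorial]
  rcases le_or_gt 0 c with h | h
  · have habs : |c| ^ 3 = c ^ 3 := by rw [abs_of_nonneg h]
    have hE : 0 ≤ 1 - Real.exp (-c) := by
      have : Real.exp (-c) ≤ Real.exp 0 := Real.exp_le_exp.mpr (by linarith)
      simp only [Real.exp_zero] at this; linarith
    have h1 : 1 - Real.exp (-c) ≤ c - c^2/2 + 2/9*c^3 := by
      have := (abs_le.mp hb').1
      rw [habs] at this; linarith
    have key := mul_nonneg hE (sub_nonneg.mpr h1)
    nlinarith [key]
  · have habs : |c| ^ 3 = -c ^ 3 := by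
      rw [abs_of_neg h]; ring
    have hE : 1 - Real.exp (-c) ≤ 0 := by
      have : Real.exp 0 ≤ Real.exp (-c) := Real.exp_le_exp.mpr (by linarith)
      simp only [Real.exp_zero] at this; linarith
    have h1 : c - c^2/2 + 2/9*c^3 ≤ 1 - Real.exp (-c) := by
      have := (abs_le.mp hb').2
      rw [habs] at this; linarith
    have key := mul_nonneg (neg_nonneg.mpr hE) (sub_nonneg.mpr h1)
    nlinarith [key]

lemma sign_helper (σ β : ℝ) (hσ : 0 ≤ σ) : 0 ≤ (1 - Real.exp (-(σ * β))) * β := by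
  rcases le_or_gt 0 β with h | h
  · have : Real.exp (-(σ * β)) ≤ Real.exp 0 := Real.exp_le_exp.mpr (by nlinarith)
    simp only [Real.exp_zero] at this
    exact mul_nonneg (by linarith) h
  · have : Real.exp 0 ≤ Real.exp (-(σ * β)) := Real.exp_le_exp.mpr (by nlinarith)
    simp only [Real.exp_zero] at this
    nlinarith

lemma claimB {d N : ℕ} (x : Fin N → EuclideanSpace ℝ (Fin d)) (hx : ∀ n, ‖x n‖ ≤ 1)
    (p : Fin N → ℝ) (hp : ∀ n, 0 < p n) (s : ℝ) (hs : 0 ≤ s)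
    (hsL : s * ∑ n, p n ≤ 1)
    (g : EuclideanSpace ℝ (Fin d)) (hg : g = ∑ n, p n • x n)
    (b : Fin N → ℝ) (hb : ∀ n, b n = ⟪g, x n⟫)
    (q : Fin N → ℝ) (hq : ∀ n, q n = p n * Real.exp (-(s * b n))) :
    ‖∑ n, q n • x n‖ ^ 2 ≤ ∑ n, q n * b n := by
  set L : ℝ := ∑ n, p n with hL
  have hL0 : 0 ≤ L := Finset.sum_nonneg fun n _ => (hp n).le
  have hgle : ‖g‖ ≤ L := by
    rw [hg]
    refine (norm_sum_le _ _).trans ?_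
    refine Finset.sum_le_sum fun n _ => ?_
    rw [norm_smul, Real.norm_eq_abs, abs_of_pos (hp n)]
    calc p n * ‖x n‖ ≤ p n * 1 := by
          exact mul_le_mul_of_nonneg_left (hx n) (hp n).le
      _ = p n := mul_one _
  have hbabs : ∀ n, |b n| ≤ ‖g‖ := by
    intro n
    rw [hb]
    calc |⟪g, x n⟫| ≤ ‖g‖ * ‖x n‖ := abs_real_inner_le_norm _ _
      _ ≤ ‖g‖ * 1 := mul_le_mul_of_nonneg_left (hx n) (norm_nonneg _)
      _ = ‖g‖ := mul_one _
  have hc1 : ∀ n, |s * b n| ≤ 1 := by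
    intro n
    rw [abs_mul, abs_of_nonneg hs]
    calc s * |b n| ≤ s * ‖g‖ := mul_le_mul_of_nonneg_left (hbabs n) hs
      _ ≤ s * L := mul_le_mul_of_nonneg_left hgle hs
      _ ≤ 1 := hsL
  set y : Fin N → ℝ := fun n => p n * (1 - Real.exp (-(s * b n))) with hy
  set R : Fin N → ℝ := fun n => s * p n * (1 - (s * b n)/2 + (2/9)*(s * b n)^2) with hR
  have hT_each : ∀ n, 0 ≤ y n * b n := by
    intro n
    have := sign_helper s (b n) hs
    have hpn := (hp n).le
    simp only [hy]
    nlinarith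
  set T : ℝ := ∑ n, y n * b n with hT
  have hT0 : 0 ≤ T := Finset.sum_nonneg fun n _ => hT_each n
  have hR0 : ∀ n, 0 ≤ R n := by
    intro n
    have h1 : s * b n ≤ 1 := le_of_abs_le (hc1 n)
    have hpn := (hp n).le
    have hpoly : 0 ≤ 1 - (s * b n)/2 + (2/9)*(s * b n)^2 := by nlinarith [sq_nonneg (s * b n)]
    simp only [hR]
    exact mul_nonneg (mul_nonneg hs hpn) hpoly
  have hyb : ∀ n, (y n)^2 ≤ (y n * b n) * R n := by
    intro n
    have h := exp_cubic_bound (hc1 n)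
    have hp2 := sq_nonneg (p n)
    have := mul_le_mul_of_nonneg_left h hp2
    simp only [hy, hR]
    nlinarith
  -- Cauchy-Schwarz step
  have habs_le : ∀ n, |y n| ≤ Real.sqrt (y n * b n) * Real.sqrt (R n) := by
    intro n
    rw [← Real.sqrt_mul (hT_each n)]
    rw [← Real.sqrt_sq_eq_abs]
    exact Real.sqrt_le_sqrt (hyb n)
  have hCS : (∑ n, |y n|) ^ 2 ≤ T * ∑ n, R n := by
    have h1 : ∑ n, |y n| ≤ ∑ n, Real.sqrt (y n * b n) * Real.sqrt (R n) :=
      Finset.sum_le_sum fun n _ => habs_le n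
    have h2 := Finset.sum_mul_sq_le_sq_mul_sq Finset.univ
      (fun n => Real.sqrt (y n * b n)) (fun n => Real.sqrt (R n))
    have h3 : ∑ n, Real.sqrt (y n * b n) ^ 2 = T := by
      rw [hT]; exact Finset.sum_congr rfl fun n _ => Real.sq_sqrt (hT_each n)
    have h4 : ∑ n, Real.sqrt (R n) ^ 2 = ∑ n, R n :=
      Finset.sum_congr rfl fun n _ => Real.sq_sqrt (hR0 n)
    calc (∑ n, |y n|) ^ 2 ≤ (∑ n, Real.sqrt (y n * b n) * Real.sqrt (R n)) ^ 2 := by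
          apply pow_le_pow_left₀ (Finset.sum_nonneg fun n _ => abs_nonneg _) h1
      _ ≤ (∑ n, Real.sqrt (y n * b n) ^ 2) * ∑ n, Real.sqrt (R n) ^ 2 := h2
      _ = T * ∑ n, R n := by rw [h3, h4]
  -- sum of R is at most 1
  have hpb : ∑ n, p n * b n = ‖g‖ ^ 2 := by
    have h0 : ⟪g, ∑ n, p n • x n⟫ = ∑ n, p n * b n := by
      rw [inner_sum]
      exact Finset.sum_congr rfl fun n _ => by rw [real_inner_smul_right, hb]
    calc ∑ n, p n * b n = ⟪g, ∑ n, p n • x n⟫ := h0.symm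
      _ = ⟪g, g⟫ := by rw [← hg]
      _ = ‖g‖ ^ 2 := real_inner_self_eq_norm_sq _
  have hpb2 : ∑ n, p n * (b n)^2 ≤ L * ‖g‖^2 := by
    calc ∑ n, p n * (b n)^2 ≤ ∑ n, p n * ‖g‖^2 := by
          refine Finset.sum_le_sum fun n _ => ?_
          refine mul_le_mul_of_nonneg_left ?_ (hp n).le
          rw [← sq_abs]
          exact pow_le_pow_left₀ (abs_nonneg _) (hbabs n) 2
      _ = L * ‖g‖^2 := by rw [hL, ← Finset.sum_mul]
  have hRsum : ∑ n, R n ≤ 1 := by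
    have hexp : ∑ n, R n
        = s * L - s^2/2 * (∑ n, p n * b n) + (2/9) * s^3 * (∑ n, p n * (b n)^2) := by
      rw [hL, Finset.mul_sum, Finset.mul_sum, Finset.mul_sum, ← Finset.sum_sub_distrib,
        ← Finset.sum_add_distrib]
      exact Finset.sum_congr rfl fun n _ => by simp only [hR]; ring
    rw [hexp, hpb]
    have hG2 : (0:ℝ) ≤ ‖g‖^2 := sq_nonneg _
    have key : s^3 * (∑ n, p n * (b n)^2) ≤ s^2 * ‖g‖^2 := by
      calc s^3 * (∑ n, p n * (b n)^2) ≤ s^3 * (L * ‖g‖^2) := by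
            exact mul_le_mul_of_nonneg_left hpb2 (by positivity)
        _ = (s * L) * (s^2 * ‖g‖^2) := by ring
        _ ≤ 1 * (s^2 * ‖g‖^2) := by
            exact mul_le_mul_of_nonneg_right hsL (by positivity)
        _ = s^2 * ‖g‖^2 := one_mul _
    nlinarith [sq_nonneg s, mul_nonneg (mul_nonneg hs hs) hG2]
  -- assemble
  set gs : EuclideanSpace ℝ (Fin d) := ∑ n, q n • x n with hgs
  set Δ : EuclideanSpace ℝ (Fin d) := ∑ n, y n • x n with hΔ
  have hsplit : Δ + gs = g := by
    rw [hg, hΔ, hgs, ← Finset.sum_add_distrib]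
    refine Finset.sum_congr rfl fun n _ => ?_
    rw [← add_smul]
    congr 1
    rw [hy, hq]
    ring
  have hΔnorm : ‖Δ‖ ≤ ∑ n, |y n| := by
    rw [hΔ]
    refine (norm_sum_le _ _).trans (Finset.sum_le_sum fun n _ => ?_)
    rw [norm_smul, Real.norm_eq_abs]
    calc |y n| * ‖x n‖ ≤ |y n| * 1 := mul_le_mul_of_nonneg_left (hx n) (abs_nonneg _)
      _ = |y n| := mul_one _
  have hΔsq : ‖Δ‖^2 ≤ T := by
    calc ‖Δ‖^2 ≤ (∑ n, |y n|)^2 := pow_le_pow_left₀ (norm_nonneg _) hΔnorm 2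
      _ ≤ T * ∑ n, R n := hCS
      _ ≤ T * 1 := mul_le_mul_of_nonneg_left hRsum hT0
      _ = T := mul_one _
  have hinner1 : ⟪g, gs⟫ = ∑ n, q n * b n := by
    rw [hgs, inner_sum]
    exact Finset.sum_congr rfl fun n _ => by rw [real_inner_smul_right, hb, mul_comm]
  have hinner2 : ⟪Δ, g⟫ = T := by
    rw [hΔ, sum_inner, hT]
    exact Finset.sum_congr rfl fun n _ => by
      rw [real_inner_smul_left, real_inner_comm, hb]
  have hfinal : ⟪g, gs⟫ = ⟪Δ, g⟫ - ‖Δ‖^2 + ‖gs‖^2 := by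
    conv_lhs => rw [← hsplit]
    rw [inner_add_left]
    have e1 : ⟪Δ, gs⟫ = ⟪Δ, g⟫ - ⟪Δ, Δ⟫ := by
      conv_lhs => rw [show gs = g - Δ by rw [← hsplit]; abel]
      rw [inner_sub_right]
    rw [e1, real_inner_self_eq_norm_sq, real_inner_self_eq_norm_sq]
  rw [← hinner1, hfinal, hinner2]
  linarith

lemma dual_bound {d N : ℕ} (x : Fin N → EuclideanSpace ℝ (Fin d)) {γ : ℝ}
    (u : EuclideanSpace ℝ (Fin d)) (hu : ‖u‖ = 1) (hlb : ∀ n, γ ≤ ⟪u, x n⟫)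
    (μ : Fin N → ℝ) (hμ : ∀ n, 0 ≤ μ n) : γ * ∑ n, μ n ≤ ‖∑ n, μ n • x n‖ := by
  calc γ * ∑ n, μ n = ∑ n, μ n * γ := by rw [Finset.mul_sum]; exact Finset.sum_congr rfl fun n _ => mul_comm _ _
    _ ≤ ∑ n, μ n * ⟪u, x n⟫ := Finset.sum_le_sum fun n _ => mul_le_mul_of_nonneg_left (hlb n) (hμ n)
    _ = ⟪u, ∑ n, μ n • x n⟫ := by
        rw [inner_sum]
        exact Finset.sum_congr rfl fun n _ => (real_inner_smul_right _ _ _).symm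
    _ ≤ ‖u‖ * ‖∑ n, μ n • x n‖ := real_inner_le_norm _ _
    _ = ‖∑ n, μ n • x n‖ := by rw [hu, one_mul]

lemma step_bound_s11 {d N : ℕ} (x : Fin N → EuclideanSpace ℝ (Fin d)) (hx : ∀ n, ‖x n‖ ≤ 1)
    (hNe : (Finset.univ : Finset (Fin N)).Nonempty)
    {γ : ℝ} (hγpos : 0 < γ)
    (u : EuclideanSpace ℝ (Fin d)) (hu : ‖u‖ = 1) (hlb : ∀ n, γ ≤ ⟪u, x n⟫)
    (W : EuclideanSpace ℝ (Fin d)) (η : ℝ) (hη : 0 ≤ η)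
    (hηL : η * (∑ n, Real.exp (-⟪W, x n⟫)) ≤ 1) :
    (∑ n, Real.exp (-⟪W, x n⟫))⁻¹ + γ^2 * η
      ≤ (∑ n, Real.exp (-⟪W + η • ∑ m, Real.exp (-⟪W, x m⟫) • x m, x n⟫))⁻¹ := by
  set p : Fin N → ℝ := fun n => Real.exp (-⟪W, x n⟫) with hp
  have hppos : ∀ n, 0 < p n := fun n => Real.exp_pos _
  set g : EuclideanSpace ℝ (Fin d) := ∑ n, p n • x n with hgdef
  set b : Fin N → ℝ := fun n => ⟪g, x n⟫ with hbdef
  set f : ℝ → ℝ := fun s => ∑ n, Real.exp (-(⟪W, x n⟫ + s * b n)) with hf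
  have hfeq : ∀ s : ℝ, (∑ n, Real.exp (-⟪W + s • g, x n⟫)) = f s := by
    intro s
    refine Finset.sum_congr rfl fun n _ => ?_
    rw [inner_add_left, real_inner_smul_left]
  have hfpos : ∀ s, 0 < f s := fun s => Finset.sum_pos (fun n _ => Real.exp_pos _) hNe
  have hf0 : f 0 = ∑ n, p n := by
    refine Finset.sum_congr rfl fun n _ => ?_
    simp only [zero_mul, add_zero]
    rfl
  set D : ℝ → ℝ := fun s => ∑ n, Real.exp (-(⟪W, x n⟫ + s * b n)) * (-(b n)) with hD
  have hderiv : ∀ s, HasDerivAt f (D s) s := by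
    intro s
    apply HasDerivAt.fun_sum
    intro n _
    exact (((hasDerivAt_mul_const (b n)).const_add ⟪W, x n⟫).neg).exp
  have hkey : ∀ s, 0 ≤ s → s ≤ η → γ^2 * (f s)^2 ≤ -(D s) := by
    intro s hs0 hsη
    set q : Fin N → ℝ := fun n => p n * Real.exp (-(s * b n)) with hqdef
    have hqe : ∀ n, Real.exp (-(⟪W, x n⟫ + s * b n)) = q n := by
      intro n
      rw [hqdef]
      simp only [hp]
      rw [neg_add, Real.exp_add]
    have hDval : -(D s) = ∑ n, q n * b n := by
      rw [hD, ← Finset.sum_neg_distrib]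
      exact Finset.sum_congr rfl fun n _ => by rw [hqe n]; ring
    have hfs : f s = ∑ n, q n := Finset.sum_congr rfl fun n _ => hqe n
    have hsL : s * ∑ n, p n ≤ 1 := by
      have hL0 : 0 ≤ ∑ n, p n := Finset.sum_nonneg fun n _ => (hppos n).le
      calc s * ∑ n, p n ≤ η * ∑ n, p n := mul_le_mul_of_nonneg_right hsη hL0
        _ ≤ 1 := hηL
    have hcb := claimB x hx p hppos s hs0 hsL g hgdef b (fun n => rfl) q (fun n => rfl)
    have hq0 : ∀ n, 0 ≤ q n := fun n => (mul_pos (hppos n) (Real.exp_pos _)).le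
    have hdual := dual_bound x u hu hlb q hq0
    have h1 : (γ * ∑ n, q n)^2 ≤ ‖∑ n, q n • x n‖^2 :=
      pow_le_pow_left₀ (mul_nonneg hγpos.le (Finset.sum_nonneg fun n _ => hq0 n)) hdual 2
    rw [hDval, hfs]
    calc γ^2 * (∑ n, q n)^2 = (γ * ∑ n, q n)^2 := by ring
      _ ≤ ‖∑ n, q n • x n‖^2 := h1
      _ ≤ ∑ n, q n * b n := hcb
  set φ : ℝ → ℝ := fun s => (f s)⁻¹ - γ^2 * s with hφ
  have hφd : ∀ s, HasDerivAt φ (-(D s) / (f s)^2 - γ^2) s := by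
    intro s
    have h1 := (hderiv s).inv (ne_of_gt (hfpos s))
    have h2 : HasDerivAt (fun s : ℝ => γ^2 * s) (γ^2) s := by
      simpa using (hasDerivAt_id s).const_mul (γ^2)
    exact h1.sub h2
  have hmono : MonotoneOn φ (Set.Icc 0 η) := by
    apply monotoneOn_of_deriv_nonneg (convex_Icc 0 η)
    · exact fun s _ => ((hφd s).differentiableAt).continuousAt.continuousWithinAt
    · exact fun s hs => ((hφd s).differentiableAt).differentiableWithinAt
    · intro s hs
      rw [interior_Icc] at hs
      rw [(hφd s).deriv]
      have hk := hkey s hs.1.le hs.2.le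
      have hf2 : 0 < (f s)^2 := pow_pos (hfpos s) 2
      rw [sub_nonneg, le_div_iff₀ hf2]
      linarith
  have hm := hmono (Set.left_mem_Icc.mpr hη) (Set.right_mem_Icc.mpr hη) hη
  simp only [hφ] at hm
  rw [hfeq η]
  rw [hf0] at hm
  simp only [mul_zero, sub_zero] at hm
  linarith

/-- Logarithmic growth of the iterate norm for gradient descent on the exponential loss:
`‖w(t+1)‖ ≥ log(ηγ²(t+1) + 1/L(w(0)))`. -/
theorem gd_expLoss_norm_log_growth
    {d N : ℕ} (x : Fin N → EuclideanSpace ℝ (Fin d))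
    (hx : ∀ n, ‖x n‖ ≤ 1)
    (hsep : ∃ wstar : EuclideanSpace ℝ (Fin d), ∀ n, 0 < ⟪wstar, x n⟫)
    (hNe : (Finset.univ : Finset (Fin N)).Nonempty)
    (γ : ℝ)
    (hγ : IsGreatest {m : ℝ | ∃ u : EuclideanSpace ℝ (Fin d), ‖u‖ = 1 ∧
        m = Finset.univ.inf' hNe (fun n => ⟪u, x n⟫)} γ)
    (η : ℝ) (w : ℕ → EuclideanSpace ℝ (Fin d))
    (hη : 0 < η) (hη' : η < 1 / expLoss x (w 0))
    (hGD : ∀ t : ℕ, w (t + 1) = w t - η • expLossGrad x (w t)) :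
    ∀ t : ℕ, Real.log (η * γ ^ 2 * (t + 1) + 1 / expLoss x (w 0)) ≤ ‖w (t + 1)‖ := by
  obtain ⟨u, hu, hueq⟩ := hγ.1
  have hlb : ∀ n, γ ≤ ⟪u, x n⟫ := fun n => hueq ▸ Finset.inf'_le _ (Finset.mem_univ n)
  -- γ is positive
  obtain ⟨ws, hws⟩ := hsep
  obtain ⟨n₀, -⟩ := id hNe
  have hws0 : ws ≠ 0 := by
    intro h
    have := hws n₀
    rw [h, inner_zero_left] at this
    exact lt_irrefl 0 this
  have hγpos : 0 < γ := by
    have hmem : (Finset.univ.inf' hNe fun n => ⟪(‖ws‖⁻¹ • ws : EuclideanSpace ℝ (Fin d)), x n⟫)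
        ∈ {m : ℝ | ∃ u : EuclideanSpace ℝ (Fin d), ‖u‖ = 1 ∧
          m = Finset.univ.inf' hNe (fun n => ⟪u, x n⟫)} :=
      ⟨‖ws‖⁻¹ • ws, norm_smul_inv_norm hws0, rfl⟩
    have h1 := hγ.2 hmem
    have h2 : 0 < Finset.univ.inf' hNe fun n => ⟪(‖ws‖⁻¹ • ws : EuclideanSpace ℝ (Fin d)), x n⟫ := by
      rw [Finset.lt_inf'_iff]
      intro n _
      rw [real_inner_smul_left]
      exact mul_pos (inv_pos.mpr (norm_pos_iff.mpr hws0)) (hws n)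
    exact h2.trans_le h1
  -- positivity of losses
  have hLpos : ∀ v : EuclideanSpace ℝ (Fin d), 0 < expLoss x v := fun v =>
    Finset.sum_pos (fun n _ => Real.exp_pos _) ⟨n₀, Finset.mem_univ n₀⟩
  have hL0pos := hLpos (w 0)
  have hηL0 : η * expLoss x (w 0) < 1 := (lt_div_iff₀ hL0pos).mp hη'
  -- the step rewrite
  have hstep_eq : ∀ v : EuclideanSpace ℝ (Fin d),
      v - η • expLossGrad x v = v + η • ∑ m, Real.exp (-⟪v, x m⟫) • x m := by
    intro v
    rw [expLossGrad, smul_neg, sub_neg_eq_add]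
  -- main induction
  have main : ∀ t : ℕ, (expLoss x (w 0))⁻¹ + η * γ^2 * t ≤ (expLoss x (w t))⁻¹ := by
    intro t
    induction t with
    | zero => simp
    | succ t ih =>
      have hLt := hLpos (w t)
      have hinv : (expLoss x (w 0))⁻¹ ≤ (expLoss x (w t))⁻¹ := by
        have : 0 ≤ η * γ^2 * t := by positivity
        linarith
      have hle : expLoss x (w t) ≤ expLoss x (w 0) := by
        rwa [inv_le_inv₀ hL0pos hLt] at hinv
      have hηLt : η * expLoss x (w t) ≤ 1 := by
        calc η * expLoss x (w t) ≤ η * expLoss x (w 0) :=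
              mul_le_mul_of_nonneg_left hle hη.le
          _ ≤ 1 := hηL0.le
      have hb := step_bound_s11 x hx ⟨n₀, Finset.mem_univ n₀⟩ hγpos u hu hlb (w t) η hη.le hηLt
      rw [← hstep_eq (w t), ← hGD t] at hb
      push_cast
      have : (expLoss x (w t))⁻¹ + γ^2 * η ≤ (expLoss x (w (t+1)))⁻¹ := hb
      push_cast at ih
      linarith
  intro t
  have hm := main (t + 1)
  have hLpos' := hLpos (w (t + 1))
  -- lower bound on loss: L(w) ≥ exp(-‖w‖)
  have hlow : Real.exp (-‖w (t+1)‖) ≤ expLoss x (w (t+1)) := by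
    rw [expLoss]
    have h1 : ⟪w (t+1), x n₀⟫ ≤ ‖w (t+1)‖ := by
      calc ⟪w (t+1), x n₀⟫ ≤ ‖w (t+1)‖ * ‖x n₀‖ := real_inner_le_norm _ _
        _ ≤ ‖w (t+1)‖ * 1 := mul_le_mul_of_nonneg_left (hx n₀) (norm_nonneg _)
        _ = ‖w (t+1)‖ := mul_one _
    calc Real.exp (-‖w (t+1)‖) ≤ Real.exp (-⟪w (t+1), x n₀⟫) := Real.exp_le_exp.mpr (by linarith)
      _ ≤ ∑ n, Real.exp (-⟪w (t+1), x n⟫) :=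
          Finset.single_le_sum (f := fun n => Real.exp (-⟪w (t+1), x n⟫))
            (fun n _ => (Real.exp_pos _).le) (Finset.mem_univ n₀)
  have hargpos : 0 < η * γ ^ 2 * (t + 1 : ℝ) + 1 / expLoss x (w 0) := by positivity
  have harg_le : η * γ ^ 2 * ((t:ℝ) + 1) + 1 / expLoss x (w 0) ≤ (expLoss x (w (t+1)))⁻¹ := by
    rw [one_div]
    push_cast at hm
    linarith
  calc Real.log (η * γ ^ 2 * ((t:ℝ) + 1) + 1 / expLoss x (w 0))
      ≤ Real.log ((expLoss x (w (t+1)))⁻¹) := Real.log_le_log hargpos harg_le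
    _ = -Real.log (expLoss x (w (t+1))) := Real.log_inv _
    _ ≤ ‖w (t+1)‖ := by
        have := Real.log_le_log (Real.exp_pos _) hlow
        rw [Real.log_exp] at this
        linarith
end

section
/- Non-convergence to the max margin for a polynomial-tailed loss under gradient flow: let w₁, w₂ : [0, ∞) → ℝ be differentiable functions with w₁(0) > 0 and w₂(0) > 0 satisfying w₁'(t) = w₁(t)^{−2} and w₂'(t) = (1/2) w₂(t)^{−2} for all t ≥ 0. Then w₁(t) = (3t + w₁(0)³)^{1/3} and w₂(t) = ((3/2)t + w₂(0)³)^{1/3} for all t ≥ 0, and lim_{t→∞} w₁(t)/w₂(t) = 2^{1/3}; in particular the limit differs from 2, the ratio ŵ₁/ŵ₂ of the coordinates of the L2 max-margin separator ŵ = (1, 1/2). -/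
open Filter

/-- Generic cube-root flow lemma. -/
lemma cube_flow (f : ℝ → ℝ) (c : ℝ) (hc : 0 < c) (hf0 : 0 < f 0)
    (hd : ∀ t : ℝ, 0 ≤ t → HasDerivAt f (c * (f t ^ 2)⁻¹) t) :
    ∀ t : ℝ, 0 ≤ t → f t = (3 * c * t + f 0 ^ 3) ^ ((1 : ℝ) / 3) := by
  -- f is monotone on Ici 0, hence positive
  have hmono : MonotoneOn f (Set.Ici 0) := by
    apply monotoneOn_of_deriv_nonneg (convex_Ici 0)
    · intro t ht
      exact (hd t ht).continuousAt.continuousWithinAt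
    · intro t ht
      rw [interior_Ici] at ht
      exact (hd t (le_of_lt ht)).differentiableAt.differentiableWithinAt
    · intro t ht
      rw [interior_Ici] at ht
      rw [(hd t ht.le).deriv]
      positivity
  have hpos : ∀ t : ℝ, 0 ≤ t → 0 < f t := fun t ht =>
    lt_of_lt_of_le hf0 (hmono Set.self_mem_Ici ht ht)
  have key : ∀ t : ℝ, 0 ≤ t → f t ^ 3 = 3 * c * t + f 0 ^ 3 := by
    intro t ht
    have := constant_of_has_deriv_right_zero (f := fun s => f s ^ 3 - 3 * c * s)
      (a := 0) (b := t)
      (fun s hs => ((((hd s hs.1).pow 3).sub ((hasDerivAt_id s).const_mul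
        (3 * c))).continuousAt.continuousWithinAt))
      (fun s hs => by
        have h : HasDerivAt (fun s => f s ^ 3 - 3 * c * s)
            ((3 : ℕ) * f s ^ 2 * (c * (f s ^ 2)⁻¹) - 3 * c * 1) s :=
          ((hd s hs.1).pow 3).sub ((hasDerivAt_id s).const_mul (3 * c))
        have hz : ((3 : ℕ) * f s ^ 2 * (c * (f s ^ 2)⁻¹) - 3 * c * 1 : ℝ) = 0 := by
          have hfs : (f s ^ 2 : ℝ) ≠ 0 := by
            have := hpos s hs.1; positivity
          field_simp
          rw [mul_div_assoc, div_self (hpos s hs.1).ne']; push_cast; ring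
        rw [hz] at h
        exact h.hasDerivWithinAt) t (Set.right_mem_Icc.mpr ht)
    linarith
  intro t ht
  have h3 : f t ^ 3 = 3 * c * t + f 0 ^ 3 := key t ht
  have hft : 0 < f t := hpos t ht
  rw [← h3]
  rw [← Real.rpow_natCast (f t) 3, ← Real.rpow_mul hft.le]
  norm_num

/-- Non-convergence to the max margin for a polynomial-tailed loss under gradient flow:
for the dataset `x₁ = (1,0)`, `x₂ = (0,2)` with loss tail `−ℓ'(u) = u⁻²`, the gradient flow
`w₁' = w₁⁻²`, `w₂' = (1/2) w₂⁻²` has explicit solutions whose direction ratio tends to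
`2^{1/3} ≠ 2 = ŵ₁/ŵ₂`, the coordinate ratio of the max-margin separator `ŵ = (1, 1/2)`. -/
theorem gradient_flow_powerlaw_not_max_margin
    (w₁ w₂ : ℝ → ℝ)
    (hw₁0 : 0 < w₁ 0) (hw₂0 : 0 < w₂ 0)
    (hd₁ : ∀ t : ℝ, 0 ≤ t → HasDerivAt w₁ ((w₁ t ^ 2)⁻¹) t)
    (hd₂ : ∀ t : ℝ, 0 ≤ t → HasDerivAt w₂ ((1 / 2) * (w₂ t ^ 2)⁻¹) t) :
    (∀ t : ℝ, 0 ≤ t →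
      w₁ t = (3 * t + w₁ 0 ^ 3) ^ ((1 : ℝ) / 3) ∧
      w₂ t = ((3 / 2) * t + w₂ 0 ^ 3) ^ ((1 : ℝ) / 3)) ∧
    Tendsto (fun t => w₁ t / w₂ t) atTop (nhds ((2 : ℝ) ^ ((1 : ℝ) / 3))) ∧
    (2 : ℝ) ^ ((1 : ℝ) / 3) ≠ 2 := by
  have h1 : ∀ t : ℝ, 0 ≤ t → w₁ t = (3 * t + w₁ 0 ^ 3) ^ ((1 : ℝ) / 3) := by
    have := cube_flow w₁ 1 one_pos hw₁0 (fun t ht => by simpa using hd₁ t ht)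
    intro t ht; simpa using this t ht
  have h2 : ∀ t : ℝ, 0 ≤ t → w₂ t = ((3 / 2) * t + w₂ 0 ^ 3) ^ ((1 : ℝ) / 3) := by
    have := cube_flow w₂ (1/2) (by norm_num) hw₂0 hd₂
    intro t ht
    have := this t ht
    convert this using 3
    ring
  refine ⟨fun t ht => ⟨h1 t ht, h2 t ht⟩, ?_, ?_⟩
  · set a := w₁ 0 ^ 3 with ha
    set b := w₂ 0 ^ 3 with hb
    have hapos : 0 < a := by positivity
    have hbpos : 0 < b := by positivity
    -- the ratio tends to 2, then compose with rpow
    have hr : Tendsto (fun t : ℝ => (3 * t + a) / ((3/2) * t + b)) atTop (nhds 2) := by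
      have : Tendsto (fun t : ℝ => (3 + a / t) / (3/2 + b / t)) atTop (nhds 2) := by
        have hza : Tendsto (fun t : ℝ => a / t) atTop (nhds 0) :=
          tendsto_const_nhds.div_atTop tendsto_id
        have hzb : Tendsto (fun t : ℝ => b / t) atTop (nhds 0) :=
          tendsto_const_nhds.div_atTop tendsto_id
        have hnum : Tendsto (fun t : ℝ => 3 + a / t) atTop (nhds 3) := by
          simpa using (tendsto_const_nhds : Tendsto (fun _ : ℝ => (3:ℝ)) atTop _).add hza
        have hden : Tendsto (fun t : ℝ => 3/2 + b / t) atTop (nhds (3/2)) := by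
          simpa using (tendsto_const_nhds : Tendsto (fun _ : ℝ => (3/2:ℝ)) atTop _).add hzb
        have := hnum.div hden (by norm_num)
        norm_num at this
        exact this
      refine Tendsto.congr' ?_ this
      filter_upwards [eventually_gt_atTop 0] with t ht
      field_simp
    have hc : ContinuousAt (fun x : ℝ => x ^ ((1:ℝ)/3)) 2 :=
      Real.continuousAt_rpow_const 2 ((1:ℝ)/3) (Or.inl (by norm_num))
    have := hc.tendsto.comp hr
    refine Tendsto.congr' ?_ this
    filter_upwards [eventually_ge_atTop 0] with t ht
    have hn : (0:ℝ) ≤ 3 * t + a := by positivity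
    have hdpos : (0:ℝ) < (3/2) * t + b := by positivity
    simp only [Function.comp]
    rw [h1 t ht, h2 t ht, ← Real.div_rpow hn hdpos.le]
  · have : (2:ℝ) ^ ((1:ℝ)/3) < 2 ^ (1:ℝ) := by
      apply Real.rpow_lt_rpow_left_iff (by norm_num : (1:ℝ) < 2) |>.mpr
      norm_num
    rw [Real.rpow_one] at this
    exact ne_of_lt this
end

section
/- Convergence to the max margin for sub-poly-exponential tails under gradient flow: fix ε > 1, and let w₁, w₂ : [0, ∞) → ℝ be differentiable with w₁(0) > e and 2w₂(0) > e, satisfying w₁'(t) = exp(−(log w₁(t))^ε) · w₁(t) / (ε (log w₁(t))^{ε−1}) and w₂'(t) = 2 · exp(−(log(2w₂(t)))^ε) · (2w₂(t)) / (ε (log(2w₂(t)))^{ε−1}) for all t ≥ 0. Then w₁(t) = exp((log(t + C̃₁))^{1/ε}) and 2w₂(t) = exp((log(4t + C̃₂))^{1/ε}) where C̃₁ = exp((log w₁(0))^ε) and C̃₂ = exp((log(2w₂(0)))^ε), and lim_{t→∞} w₁(t)/w₂(t) = 2 = ŵ₁/ŵ₂, the ratio of the coordinates of the L2 max-margin separator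 ŵ = (1, 1/2). -/
open Filter

lemma flow_formula (ε a : ℝ) (hε : 1 < ε) (ha : 0 < a) (w : ℝ → ℝ)
    (hw0 : Real.exp 1 < w 0)
    (hd : ∀ t : ℝ, 0 ≤ t → HasDerivAt w
      (a * (Real.exp (-(Real.log (w t) ^ ε)) * w t / (ε * Real.log (w t) ^ (ε - 1)))) t) :
    ∀ t : ℝ, 0 ≤ t →
      w t = Real.exp ((Real.log (a * t + Real.exp (Real.log (w 0) ^ ε))) ^ (1 / ε)) := by
  have hεpos : (0:ℝ) < ε := by linarith
  -- Step 1 : w stays above e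
  have hpos : ∀ t : ℝ, 0 ≤ t → Real.exp 1 < w t := by
    by_contra h
    push_neg at h
    obtain ⟨T₀, hT₀, hwT₀⟩ := h
    set S : Set ℝ := {t | 0 ≤ t ∧ w t ≤ Real.exp 1} with hS
    have hSne : S.Nonempty := ⟨T₀, hT₀, hwT₀⟩
    have hcontOn : ContinuousOn w (Set.Ici 0) := fun t ht =>
      ((hd t ht).continuousAt).continuousWithinAt
    have hSclosed : IsClosed S := by
      have : S = Set.Ici 0 ∩ w ⁻¹' Set.Iic (Real.exp 1) := by
        ext t; simp [hS, Set.mem_Ici, Set.mem_Iic, and_comm]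
      rw [this]
      exact hcontOn.preimage_isClosed_of_isClosed isClosed_Ici isClosed_Iic
    have hbdd : BddBelow S := ⟨0, fun t ht => ht.1⟩
    set T := sInf S with hT
    have hTS : T ∈ S := hSclosed.csInf_mem hSne hbdd
    have hT0 : 0 ≤ T := hTS.1
    have hwT : w T ≤ Real.exp 1 := hTS.2
    have hTne : T ≠ 0 := fun h0 => absurd hwT (by rw [h0]; linarith)
    have hTpos : 0 < T := lt_of_le_of_ne hT0 (Ne.symm hTne)
    -- on [0, T), w s > e
    have hgt : ∀ s, 0 ≤ s → s < T → Real.exp 1 < w s := by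
      intro s hs hsT
      by_contra hle
      push_neg at hle
      exact absurd (csInf_le hbdd ⟨hs, hle⟩) (not_le.mpr hsT)
    have hmono : StrictMonoOn w (Set.Icc 0 T) := by
      apply strictMonoOn_of_deriv_pos (convex_Icc 0 T)
        (hcontOn.mono (by intro x hx; exact hx.1))
      intro x hx
      rw [interior_Icc] at hx
      have hx0 : 0 ≤ x := hx.1.le
      have hwx : Real.exp 1 < w x := hgt x hx0 hx.2
      have hwxpos : 0 < w x := lt_trans (Real.exp_pos 1) hwx
      have hlog : 1 < Real.log (w x) := by
        have := Real.log_lt_log (Real.exp_pos 1) hwx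
        rwa [Real.log_exp] at this
      rw [(hd x hx0).deriv]
      have h1 : 0 < Real.exp (-(Real.log (w x) ^ ε)) * w x := by positivity
      have h2 : 0 < ε * Real.log (w x) ^ (ε - 1) := by
        have : (0:ℝ) < Real.log (w x) := by linarith
        positivity
      positivity
    have := hmono (Set.left_mem_Icc.mpr hT0) (Set.right_mem_Icc.mpr hT0) hTpos
    linarith
  -- Step 2 : the invariant
  set C := Real.exp (Real.log (w 0) ^ ε) with hC
  have hderivG : ∀ t : ℝ, 0 ≤ t →
      HasDerivAt (fun s => Real.exp (Real.log (w s) ^ ε) - a * s) 0 t := by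
    intro t ht
    have hwt : Real.exp 1 < w t := hpos t ht
    have hwtpos : 0 < w t := lt_trans (Real.exp_pos 1) hwt
    have hlog : 1 < Real.log (w t) := by
      have := Real.log_lt_log (Real.exp_pos 1) hwt
      rwa [Real.log_exp] at this
    have hlogpos : (0:ℝ) < Real.log (w t) := by linarith
    set d := a * (Real.exp (-(Real.log (w t) ^ ε)) * w t / (ε * Real.log (w t) ^ (ε - 1))) with hdd
    have h1 : HasDerivAt (fun s => Real.log (w s)) (d / w t) t := (hd t ht).log (ne_of_gt hwtpos)
    have h2 : HasDerivAt (fun s => Real.log (w s) ^ ε)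
        (ε * Real.log (w t) ^ (ε - 1) * (d / w t)) t := by
      have := (Real.hasDerivAt_rpow_const (x := Real.log (w t)) (p := ε)
        (Or.inl (ne_of_gt hlogpos))).comp t h1
      exact this
    have h3 : HasDerivAt (fun s => Real.exp (Real.log (w s) ^ ε))
        (Real.exp (Real.log (w t) ^ ε) * (ε * Real.log (w t) ^ (ε - 1) * (d / w t))) t := h2.exp
    have h4 : HasDerivAt (fun s : ℝ => a * s) a t := by
      simpa using (hasDerivAt_id t).const_mul a
    have h5 := h3.sub h4
    have hD : ε * Real.log (w t) ^ (ε - 1) ≠ 0 := by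
      have : (0:ℝ) < Real.log (w t) ^ (ε - 1) := Real.rpow_pos_of_pos hlogpos _
      positivity
    have hEne : Real.exp (Real.log (w t) ^ ε) ≠ 0 := (Real.exp_pos _).ne'
    refine h5.congr_deriv (Eq.symm ?_)
    rw [hdd, Real.exp_neg]
    field_simp
    ring
  have hinv : ∀ t : ℝ, 0 ≤ t → Real.exp (Real.log (w t) ^ ε) = a * t + C := by
    intro t ht
    have key := constant_of_has_deriv_right_zero
      (f := fun s => Real.exp (Real.log (w s) ^ ε) - a * s) (a := 0) (b := t)
      (fun s hs => ((hderivG s hs.1).continuousAt).continuousWithinAt)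
      (fun s hs => ((hderivG s hs.1).hasDerivWithinAt))
      t (Set.right_mem_Icc.mpr ht)
    simp only [mul_zero, sub_zero] at key
    rw [hC]; linarith
  intro t ht
  have hwt : Real.exp 1 < w t := hpos t ht
  have hwtpos : 0 < w t := lt_trans (Real.exp_pos 1) hwt
  have hlog : (0:ℝ) < Real.log (w t) := by
    have := Real.log_lt_log (Real.exp_pos 1) hwt
    rw [Real.log_exp] at this; linarith
  have h1 : Real.log (w t) ^ ε = Real.log (a * t + C) := by
    rw [← hinv t ht, Real.log_exp]
  rw [one_div, ← h1, Real.rpow_rpow_inv hlog.le (ne_of_gt hεpos), Real.exp_log hwtpos]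

/-- Convergence to the max margin for sub-poly-exponential tails under gradient flow:
for the dataset `x₁ = (1,0)`, `x₂ = (0,2)` with loss tail
`−ℓ'(u) = exp(−(log u)^ε − log(ε (log u)^{ε−1}) + log u)` with `ε > 1`, the gradient flow
has explicit solutions `w₁(t) = exp((log(t + C̃₁))^{1/ε})`,
`2w₂(t) = exp((log(4t + C̃₂))^{1/ε})` and `w₁(t)/w₂(t) → 2 = ŵ₁/ŵ₂`, the coordinate ratio
of the max-margin separator `ŵ = (1, 1/2)`. -/
theorem gradient_flow_subpolyexp_max_margin
    (ε : ℝ) (hε : 1 < ε) (w₁ w₂ : ℝ → ℝ)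
    (hw₁0 : Real.exp 1 < w₁ 0) (hw₂0 : Real.exp 1 < 2 * w₂ 0)
    (hd₁ : ∀ t : ℝ, 0 ≤ t → HasDerivAt w₁
      (Real.exp (-(Real.log (w₁ t) ^ ε)) * w₁ t /
        (ε * Real.log (w₁ t) ^ (ε - 1))) t)
    (hd₂ : ∀ t : ℝ, 0 ≤ t → HasDerivAt w₂
      (2 * (Real.exp (-(Real.log (2 * w₂ t) ^ ε)) * (2 * w₂ t) /
        (ε * Real.log (2 * w₂ t) ^ (ε - 1)))) t) :
    (∀ t : ℝ, 0 ≤ t →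
      w₁ t = Real.exp
        ((Real.log (t + Real.exp (Real.log (w₁ 0) ^ ε))) ^ (1 / ε)) ∧
      2 * w₂ t = Real.exp
        ((Real.log (4 * t + Real.exp (Real.log (2 * w₂ 0) ^ ε))) ^ (1 / ε))) ∧
    Tendsto (fun t => w₁ t / w₂ t) atTop (nhds 2) := by
  have hf₁ : ∀ t : ℝ, 0 ≤ t →
      w₁ t = Real.exp ((Real.log (t + Real.exp (Real.log (w₁ 0) ^ ε))) ^ (1 / ε)) := by
    have := flow_formula ε 1 hε one_pos w₁ hw₁0 (fun t ht => by
      simpa [one_mul] using hd₁ t ht)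
    intro t ht
    simpa [one_mul] using this t ht
  have hf₂ : ∀ t : ℝ, 0 ≤ t →
      2 * w₂ t = Real.exp ((Real.log (4 * t + Real.exp (Real.log (2 * w₂ 0) ^ ε))) ^ (1 / ε)) := by
    have := flow_formula ε 4 hε (by norm_num) (fun t => 2 * w₂ t) hw₂0 (fun t ht => by
      have h := (hd₂ t ht).const_mul 2
      exact h.congr_deriv (by ring))
    exact this
  refine ⟨fun t ht => ⟨hf₁ t ht, hf₂ t ht⟩, ?_⟩
  set C₁ := Real.exp (Real.log (w₁ 0) ^ ε) with hC₁
  set C₂ := Real.exp (Real.log (2 * w₂ 0) ^ ε) with hC₂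
  have hC₁pos : 0 < C₁ := Real.exp_pos _
  have hC₂pos : 0 < C₂ := Real.exp_pos _
  set δ := 1 / ε with hδ
  have hδpos : 0 < δ := by positivity
  have hδlt : δ < 1 := by
    rw [hδ, div_lt_one (by linarith)]; exact hε
  set A : ℝ → ℝ := fun t => Real.log (t + C₁) with hA
  set B : ℝ → ℝ := fun t => Real.log (4 * t + C₂) with hB
  -- main limit : A^δ - B^δ → 0
  have hkey' : Tendsto (fun t => B t ^ δ - A t ^ δ) atTop (nhds 0) := by
    have hAtop : Tendsto A atTop atTop :=
      Real.tendsto_log_atTop.comp (tendsto_atTop_add_const_right _ C₁ tendsto_id)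
    have hsmall : Tendsto (fun t => 2 * δ * A t ^ (δ - 1)) atTop (nhds 0) := by
      have h0 : Tendsto (fun x : ℝ => x ^ (δ - 1)) atTop (nhds 0) := by
        have := tendsto_rpow_neg_atTop (y := 1 - δ) (by linarith)
        simpa [neg_sub] using this
      have := (h0.comp hAtop).const_mul (2 * δ)
      simpa using this
    apply squeeze_zero' ?_ ?_ hsmall
    · filter_upwards [eventually_ge_atTop (max (max C₁ C₂) (Real.exp 2))] with t ht
      have ht1 : C₁ ≤ t := le_trans (le_max_left _ _) (le_trans (le_max_left _ _) ht)
      have htpos : 0 < t := lt_of_lt_of_le hC₁pos ht1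
      have hle : t + C₁ ≤ 4 * t + C₂ := by linarith
      have h := Real.log_le_log (by linarith) hle
      have ht3 : Real.exp 2 ≤ t := le_trans (le_max_right _ _) ht
      have he2 : (1:ℝ) ≤ Real.exp 2 := Real.one_le_exp (by norm_num)
      have hApos : 0 ≤ A t := Real.log_nonneg (by linarith)
      exact sub_nonneg.mpr (Real.rpow_le_rpow hApos h hδpos.le)
    · filter_upwards [eventually_ge_atTop (max (max C₁ C₂) (Real.exp 2))] with t ht
      have ht1 : C₁ ≤ t := le_trans (le_max_left _ _) (le_trans (le_max_left _ _) ht)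
      have ht2 : C₂ ≤ t := le_trans (le_max_right _ _) (le_trans (le_max_left _ _) ht)
      have ht3 : Real.exp 2 ≤ t := le_trans (le_max_right _ _) ht
      have htpos : 0 < t := lt_of_lt_of_le hC₁pos ht1
      have hAB : A t < B t := by
        apply Real.log_lt_log (by linarith)
        linarith
      have hA2 : 2 ≤ A t := by
        have : Real.exp 2 ≤ t + C₁ := by linarith
        calc (2:ℝ) = Real.log (Real.exp 2) := (Real.log_exp 2).symm
        _ ≤ A t := Real.log_le_log (Real.exp_pos 2) this
      have hApos : (0:ℝ) < A t := by linarith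
      have hBA2 : B t - A t ≤ 2 := by
        have h1 : B t ≤ Real.log (5 * t) := Real.log_le_log (by linarith) (by linarith)
        have h2 : Real.log t ≤ A t := Real.log_le_log htpos (by linarith)
        have h3 : Real.log (5 * t) = Real.log 5 + Real.log t := by
          rw [Real.log_mul (by norm_num) (ne_of_gt htpos)]
        have h4 : Real.log 5 ≤ 2 := by
          have he : Real.exp 2 = Real.exp 1 * Real.exp 1 := by
            rw [← Real.exp_add]; norm_num
          rw [show (2:ℝ) = Real.log (Real.exp 2) by rw [Real.log_exp]]
          apply Real.log_le_log (by norm_num)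
          nlinarith [Real.exp_one_gt_d9]
        linarith
      -- MVT
      obtain ⟨c, hc, hcs⟩ := exists_hasDerivAt_eq_slope (fun x => x ^ δ)
        (fun x => δ * x ^ (δ - 1)) hAB
        (by
          apply ContinuousOn.rpow_const continuousOn_id
          intro x hx
          left
          have : (0:ℝ) < x := lt_of_lt_of_le hApos hx.1
          exact ne_of_gt this)
        (fun x hx => Real.hasDerivAt_rpow_const (Or.inl (ne_of_gt (lt_trans hApos hx.1))))
      have hcA : A t ≤ c := hc.1.le
      have hne : B t - A t ≠ 0 := sub_ne_zero.mpr hAB.ne'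
      have hslope : B t ^ δ - A t ^ δ = δ * c ^ (δ - 1) * (B t - A t) := by
        rw [eq_div_iff hne] at hcs
        linarith [hcs]
      have hcbound : c ^ (δ - 1) ≤ A t ^ (δ - 1) :=
        Real.rpow_le_rpow_of_nonpos hApos hcA (by linarith)
      have hBApos : 0 ≤ B t - A t := by linarith
      calc B t ^ δ - A t ^ δ = δ * c ^ (δ - 1) * (B t - A t) := hslope
      _ ≤ δ * A t ^ (δ - 1) * 2 := by
          apply mul_le_mul
          · exact mul_le_mul_of_nonneg_left hcbound hδpos.le
          · linarith
          · linarith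
          · positivity
      _ = 2 * δ * A t ^ (δ - 1) := by ring
  have hkey : Tendsto (fun t => A t ^ δ - B t ^ δ) atTop (nhds 0) := by
    have := hkey'.neg
    simpa [neg_sub] using this
  -- conclude
  have hexp : Tendsto (fun t => 2 * Real.exp (A t ^ δ - B t ^ δ)) atTop (nhds 2) := by
    have := (Real.continuous_exp.tendsto 0).comp hkey
    have h2 := this.const_mul 2
    simpa using h2
  apply hexp.congr'
  filter_upwards [eventually_ge_atTop (0:ℝ)] with t ht
  have h1 := hf₁ t ht
  have h2 := hf₂ t ht
  have hw₂pos : w₂ t ≠ 0 := by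
    intro h0
    rw [h0, mul_zero] at h2
    exact absurd h2.symm (ne_of_gt (Real.exp_pos _))
  have e1 : w₁ t = Real.exp (A t ^ δ) := h1
  have e2 : 2 * w₂ t = Real.exp (B t ^ δ) := h2
  show 2 * Real.exp (A t ^ δ - B t ^ δ) = w₁ t / w₂ t
  rw [Real.exp_sub, ← e1, ← e2]
  field_simp
end
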